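/- arXiv:1202.1787 — 8 statements merged into one kernel-verified Lean document; each statement's English description precedes it below -/
import Mathlib

section
/- For two probability mass functions P and Q on a finite set 𝒳 with total variation distance ‖P−Q‖₁ = Σ_{x∈𝒳} |P(x)−Q(x)| ≤ 1/2, the difference of their Shannon entropies satisfies |H(P) − H(Q)| ≤ −‖P−Q‖₁ · log(‖P−Q‖₁ / |𝒳|). -/
open Real Finset

open Real Finset

lemma negMulLog_add_le {a b : ℝ} (ha : 0 ≤ a) (hb : 0 ≤ b) :
    negMulLog (a + b) ≤ negMulLog a + negMulLog b := by
  rcases eq_or_lt_of_le (add_nonneg ha hb) with h | h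
  · have ha0 : a = 0 := by linarith [ha, hb]
    have hb0 : b = 0 := by linarith
    simp [ha0, hb0]
  · have h1 := concaveOn_negMulLog.2 (Set.mem_Ici.2 (le_of_lt h)) (Set.mem_Ici.2 le_rfl)
      (div_nonneg ha h.le) (div_nonneg hb h.le) (by field_simp)
    have h2 := concaveOn_negMulLog.2 (Set.mem_Ici.2 (le_of_lt h)) (Set.mem_Ici.2 le_rfl)
      (div_nonneg hb h.le) (div_nonneg ha h.le) (by field_simp; ring)
    simp only [smul_eq_mul, mul_zero, negMulLog_zero, add_zero] at h1 h2
    have e1 : a / (a + b) * (a + b) = a := by field_simp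
    have e2 : b / (a + b) * (a + b) = b := by field_simp
    rw [e1] at h1
    rw [e2] at h2
    have : a / (a + b) * negMulLog (a + b) + b / (a + b) * negMulLog (a + b)
        = negMulLog (a + b) := by field_simp
    linarith


lemma aux_g_mono : MonotoneOn (fun t : ℝ => log (1 + t) - t * (log (t + 1) - log t)) (Set.Ici 1) := by
  have hderiv : ∀ t : ℝ, 0 < t → HasDerivAt (fun t : ℝ => log (1 + t) - t * (log (t + 1) - log t))
      (2 / (t + 1) - (log (t + 1) - log t)) t := by
    intro t ht0
    have h1 : HasDerivAt (fun t : ℝ => log (1 + t)) (1 / (1 + t)) t := by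
      have := (Real.hasDerivAt_log (by linarith : (1:ℝ) + t ≠ 0)).comp t
        ((hasDerivAt_id t).const_add 1)
      simpa [one_div, Function.comp_def] using this
    have h2 : HasDerivAt (fun t : ℝ => log (t + 1)) (1 / (t + 1)) t := by
      have := (Real.hasDerivAt_log (by linarith : t + (1:ℝ) ≠ 0)).comp t
        ((hasDerivAt_id t).add_const 1)
      simpa [one_div, Function.comp_def] using this
    have h3 : HasDerivAt (fun t : ℝ => log t) (1 / t) t := by
      simpa [one_div] using Real.hasDerivAt_log (ne_of_gt ht0)
    have h4 : HasDerivAt (fun t : ℝ => t * (log (t + 1) - log t))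
        (1 * (log (t + 1) - log t) + t * (1 / (t + 1) - 1 / t)) t :=
      (hasDerivAt_id t).mul (h2.sub h3)
    have := h1.sub h4
    refine this.congr_deriv ?_
    rw [show (1:ℝ) + t = t + 1 by ring]
    field_simp
    ring
  apply monotoneOn_of_deriv_nonneg (convex_Ici 1)
  · intro t ht
    have ht0 : (0:ℝ) < t := lt_of_lt_of_le one_pos ht
    exact (hderiv t ht0).continuousAt.continuousWithinAt
  · intro t ht
    rw [interior_Ici] at ht
    exact (hderiv t (lt_trans one_pos ht)).differentiableAt.differentiableWithinAt
  · intro t ht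
    rw [interior_Ici] at ht
    have ht' : (1:ℝ) < t := ht
    rw [(hderiv t (lt_trans one_pos ht')).deriv]
    have ht0 : (0:ℝ) < t := lt_trans one_pos ht'
    have hlog : log (t + 1) - log t ≤ 1 / t := by
      rw [← Real.log_div (by linarith) (ne_of_gt ht0)]
      calc log ((t+1)/t) ≤ (t+1)/t - 1 :=
            Real.log_le_sub_one_of_pos (by positivity)
        _ = 1 / t := by field_simp; ring
    have : 1 / t ≤ 2 / (t + 1) := by
      rw [div_le_div_iff₀ ht0 (by linarith)]
      linarith
    linarith

lemma negMulLog_one_sub_le {a : ℝ} (ha : 0 ≤ a) (ha2 : a ≤ 1 / 2) :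
    negMulLog (1 - a) ≤ negMulLog a := by
  rcases eq_or_lt_of_le ha with h | h
  · simp [← h]
  · set t := (1 - a) / a with htdef
    have ha1 : a < 1 := by linarith
    have ht1 : (1:ℝ) ≤ t := by
      rw [le_div_iff₀ h]; linarith
    have key := aux_g_mono (Set.mem_Ici.2 le_rfl) (Set.mem_Ici.2 ht1) ht1
    simp only at key
    have hzero : log (1 + 1) - 1 * (log (1 + 1) - log 1) = 0 := by simp
    rw [hzero] at key
    have h1t : 1 + t = 1 / a := by rw [htdef]; field_simp; ring
    have ht1' : t + 1 = 1 / a := by rw [add_comm]; exact h1t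
    have hlogt : log t = log (1 - a) - log a := log_div (by linarith) (ne_of_gt h)
    rw [h1t, ht1', hlogt, one_div, Real.log_inv] at key
    -- key : 0 ≤ -log a - t * (-log a - (log (1-a) - log a))
    have hta : t * a = 1 - a := by rw [htdef]; field_simp
    have key2 := mul_le_mul_of_nonneg_left key h.le
    have key3 : a * (-log a - t * (-log a - (log (1 - a) - log a)))
        = -(a * log a) + (t * a) * log (1 - a) := by ring
    rw [key3, hta, mul_zero] at key2
    simp only [negMulLog_eq_neg]
    linarith


lemma negMulLog_shift_anti {c : ℝ} (hc : 0 < c) :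
    AntitoneOn (fun s : ℝ => negMulLog (s + c) - negMulLog s) (Set.Ici 0) := by
  have hderiv : ∀ s : ℝ, 0 < s → HasDerivAt (fun s : ℝ => negMulLog (s + c) - negMulLog s)
      ((-log (s + c) - 1) - (-log s - 1)) s := by
    intro s hs
    have h1 : HasDerivAt (fun s : ℝ => negMulLog (s + c)) (-log (s + c) - 1) s := by
      have := (Real.hasDerivAt_negMulLog (by positivity : s + c ≠ 0)).comp s
        ((hasDerivAt_id s).add_const c)
      simpa [Function.comp_def] using this
    exact h1.sub (Real.hasDerivAt_negMulLog (ne_of_gt hs))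
  apply antitoneOn_of_deriv_nonpos (convex_Ici 0)
  · exact ((continuous_negMulLog.comp (continuous_id.add continuous_const)).sub
      continuous_negMulLog).continuousOn
  · intro s hs
    rw [interior_Ici] at hs
    exact (hderiv s hs).differentiableAt.differentiableWithinAt
  · intro s hs
    rw [interior_Ici] at hs
    rw [(hderiv s hs).deriv]
    have : log s ≤ log (s + c) := Real.log_le_log (by exact hs) (by linarith)
    linarith

lemma abs_negMulLog_sub_le' {s t : ℝ} (hs : 0 ≤ s) (ht1 : t ≤ 1) (hst : s ≤ t)
    (hd : t - s ≤ 1 / 2) :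
    |negMulLog t - negMulLog s| ≤ negMulLog (t - s) := by
  set c := t - s with hcdef
  have hc0 : 0 ≤ c := by linarith
  rw [abs_le]
  constructor
  · -- negMulLog s - negMulLog t ≤ negMulLog c, i.e. -(negMulLog c) ≤ negMulLog t - negMulLog s
    rcases eq_or_lt_of_le hc0 with h | h
    · simp [← h]
      have : t = s := by linarith [hcdef ▸ h]
      simp [this]
    · have hmem1 : s ∈ Set.Ici (0:ℝ) := hs
      have hmem2 : (1 - c) ∈ Set.Ici (0:ℝ) := by simp; linarith
      have hs1c : s ≤ 1 - c := by linarith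
      have hanti := negMulLog_shift_anti h hmem1 hmem2 hs1c
      simp only at hanti
      have h1c : 1 - c + c = 1 := by ring
      rw [h1c, negMulLog_one] at hanti
      have hB := negMulLog_one_sub_le hc0 hd
      have hts : s + c = t := by rw [hcdef]; ring
      rw [hts] at hanti
      linarith
  · -- negMulLog t - negMulLog s ≤ negMulLog c
    have := negMulLog_add_le hs hc0
    have hts : s + c = t := by rw [hcdef]; ring
    rw [hts] at this
    linarith


lemma abs_negMulLog_sub_le_full {s t : ℝ} (hs : 0 ≤ s) (ht : 0 ≤ t) (hs1 : s ≤ 1) (ht1 : t ≤ 1)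
    (hd : |t - s| ≤ 1 / 2) : |negMulLog t - negMulLog s| ≤ negMulLog |t - s| := by
  rcases le_total s t with h | h
  · rw [abs_of_nonneg (by linarith : 0 ≤ t - s)] at hd ⊢
    exact abs_negMulLog_sub_le' hs ht1 h hd
  · rw [abs_sub_comm t s, abs_of_nonneg (by linarith : 0 ≤ s - t)] at hd
    rw [abs_sub_comm (negMulLog t), abs_sub_comm t s,
      abs_of_nonneg (by linarith : 0 ≤ s - t)]
    exact abs_negMulLog_sub_le' ht hs1 h hd

/-- Entropy-continuity bound (Cover–Thomas Thm 16.3.2): for two pmfs `P`, `Q` on a finite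
nonempty set with total variation distance `‖P−Q‖₁ = ∑ |P x − Q x| ≤ 1/2`, we have
`|H(P) − H(Q)| ≤ −‖P−Q‖₁ · log₂(‖P−Q‖₁ / |𝒳|)`. -/
theorem stmt_0 {X : Type*} [Fintype X] [Nonempty X]
    (P Q : X → ℝ) (hP0 : ∀ x, 0 ≤ P x) (hQ0 : ∀ x, 0 ≤ Q x)
    (hP1 : ∑ x, P x = 1) (hQ1 : ∑ x, Q x = 1)
    (htv : ∑ x, |P x - Q x| ≤ 1 / 2) :
    |(-∑ x, P x * Real.logb 2 (P x)) - (-∑ x, Q x * Real.logb 2 (Q x))| ≤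
      -(∑ x, |P x - Q x|) * Real.logb 2 ((∑ x, |P x - Q x|) / (Fintype.card X : ℝ)) := by
  set n : ℝ := (Fintype.card X : ℝ) with hn
  have hn0 : 0 < n := by
    rw [hn]; exact_mod_cast Fintype.card_pos
  set ε : ℝ := ∑ x, |P x - Q x| with hε
  -- pointwise bounds
  have hPle : ∀ x, P x ≤ 1 := fun x => hP1 ▸
    Finset.single_le_sum (fun i _ => hP0 i) (mem_univ x)
  have hQle : ∀ x, Q x ≤ 1 := fun x => hQ1 ▸
    Finset.single_le_sum (fun i _ => hQ0 i) (mem_univ x)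
  have hθle : ∀ x, |P x - Q x| ≤ 1 / 2 := fun x =>
    le_trans (Finset.single_le_sum (f := fun i => |P i - Q i|)
      (fun i _ => abs_nonneg _) (mem_univ x)) (hε ▸ htv)
  -- step 1 : natural log pointwise + triangle
  have step1 : |(∑ x, negMulLog (P x)) - ∑ x, negMulLog (Q x)| ≤
      ∑ x, negMulLog |P x - Q x| := by
    rw [← Finset.sum_sub_distrib]
    refine le_trans (Finset.abs_sum_le_sum_abs _ _) (Finset.sum_le_sum fun x _ => ?_)
    exact abs_negMulLog_sub_le_full (hQ0 x) (hP0 x) (hQle x) (hPle x) (hθle x)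
  -- step 2 : Jensen
  have step2 : ∑ x, negMulLog |P x - Q x| ≤ n * negMulLog (ε / n) := by
    have hw : ∀ x ∈ (univ : Finset X), (0:ℝ) ≤ 1 / n := fun _ _ => by positivity
    have hw1 : ∑ _x : X, (1:ℝ) / n = 1 := by
      rw [Finset.sum_const, nsmul_eq_mul]
      field_simp
      simp [hn]
    have hmem : ∀ x ∈ (univ : Finset X), |P x - Q x| ∈ Set.Ici (0:ℝ) :=
      fun x _ => Set.mem_Ici.2 (abs_nonneg _)
    have hJ := concaveOn_negMulLog.le_map_sum hw hw1 hmem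
    simp only [smul_eq_mul] at hJ
    have hsum : ∑ x, 1 / n * |P x - Q x| = ε / n := by
      rw [← Finset.mul_sum, ← hε]; ring
    rw [hsum] at hJ
    have : ∑ x, 1 / n * negMulLog |P x - Q x| = (∑ x, negMulLog |P x - Q x|) / n := by
      rw [← Finset.mul_sum]; ring
    rw [this] at hJ
    calc ∑ x, negMulLog |P x - Q x| = ((∑ x, negMulLog |P x - Q x|) / n) * n := by
          field_simp
      _ ≤ negMulLog (ε / n) * n := by
          exact mul_le_mul_of_nonneg_right hJ hn0.le
      _ = n * negMulLog (ε / n) := by ring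
  have natkey : |(∑ x, negMulLog (P x)) - ∑ x, negMulLog (Q x)| ≤ n * negMulLog (ε / n) :=
    le_trans step1 step2
  -- convert to logb form
  have hlog2 : (0:ℝ) < Real.log 2 := Real.log_pos one_lt_two
  have conv : ∀ f : X → ℝ, (-∑ x, f x * Real.logb 2 (f x)) =
      (∑ x, negMulLog (f x)) / Real.log 2 := by
    intro f
    rw [eq_div_iff hlog2.ne', neg_mul, Finset.sum_mul, ← Finset.sum_neg_distrib]
    refine Finset.sum_congr rfl fun x _ => ?_
    simp only [Real.logb, negMulLog]
    field_simp
  rw [conv P, conv Q]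
  have hRHS : -ε * Real.logb 2 (ε / n) = (n * negMulLog (ε / n)) / Real.log 2 := by
    simp only [Real.logb, negMulLog]
    field_simp
  rw [hRHS, div_sub_div_same]
  rw [abs_div, abs_of_pos hlog2]
  gcongr
end

section
/- For two probability mass functions P and Q on a finite set 𝒳, the relative entropy satisfies D(P‖Q) ≥ ‖P−Q‖₁² / (2 log 2), where ‖P−Q‖₁ = Σ_x |P(x)−Q(x)| (Pinsker's inequality). -/
open Real Finset

lemma scalar1 {t : ℝ} (ht : 0 < t) :
    3/2 * (t - 1)^2 / (t + 2) ≤ t * Real.log t - t + 1 := by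
  set g : ℝ → ℝ := fun u => u * Real.log u - u + 1 - 3/2 * (u-1)^2 / (u+2) with hgdef
  set φ : ℝ → ℝ := fun u => Real.log u - 3/2 * ((u-1)*(u+5)) / (u+2)^2 with hφdef
  have hg : ∀ s : ℝ, 0 < s → HasDerivAt g (φ s) s := by
    intro s hs
    have hne : s + 2 ≠ 0 := by positivity
    have h1 : HasDerivAt (fun u : ℝ => u * Real.log u) (Real.log s + 1) s :=
      Real.hasDerivAt_mul_log hs.ne'
    have hnum : HasDerivAt (fun u : ℝ => 3/2 * (u-1)^2) (3*(s-1)) s := by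
      have := (((hasDerivAt_id s).sub_const 1).pow 2).const_mul (3/2 : ℝ)
      exact this.congr_deriv (by simp; ring)
    have hden : HasDerivAt (fun u : ℝ => u + 2) 1 s := (hasDerivAt_id s).add_const 2
    have h2 : HasDerivAt (fun u : ℝ => 3/2 * (u-1)^2 / (u+2))
        ((3*(s-1) * (s+2) - 3/2 * (s-1)^2 * 1) / (s+2)^2) s := hnum.div hden hne
    have h3 := ((h1.sub (hasDerivAt_id s)).add_const 1).sub h2
    refine h3.congr_deriv (Eq.symm ?_)
    rw [hφdef]
    field_simp
    ring
  have hφd : ∀ s : ℝ, 0 < s → HasDerivAt φ (1/s - 27/(s+2)^3) s := by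
    intro s hs
    have hne : s + 2 ≠ 0 := by positivity
    have h1 : HasDerivAt Real.log s⁻¹ s := Real.hasDerivAt_log hs.ne'
    have hnum : HasDerivAt (fun u : ℝ => 3/2 * ((u-1)*(u+5))) (3/2*(2*s+4)) s := by
      have := (((hasDerivAt_id s).sub_const 1).mul ((hasDerivAt_id s).add_const 5)).const_mul (3/2:ℝ)
      exact this.congr_deriv (by simp; ring)
    have hden : HasDerivAt (fun u : ℝ => (u+2)^2) (2*(s+2)) s := by
      have := ((hasDerivAt_id s).add_const 2).pow 2
      exact this.congr_deriv (by simp)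
    have hne2 : (s+2)^2 ≠ 0 := by positivity
    have h2 : HasDerivAt (fun u : ℝ => 3/2 * ((u-1)*(u+5)) / (u+2)^2)
        ((3/2*(2*s+4) * (s+2)^2 - 3/2*((s-1)*(s+5)) * (2*(s+2))) / ((s+2)^2)^2) s :=
      hnum.div hden hne2
    have h3 := h1.sub h2
    refine h3.congr_deriv (Eq.symm ?_)
    field_simp
    ring
  have hψ : ∀ s : ℝ, 0 < s → 0 ≤ 1/s - 27/(s+2)^3 := by
    intro s hs
    rw [sub_nonneg, div_le_div_iff₀ (by positivity) hs]
    nlinarith [sq_nonneg (s-1), hs.le]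
  -- φ is monotone on Ioi 0
  have hφmono : MonotoneOn φ (Set.Ioi (0:ℝ)) := by
    apply monotoneOn_of_deriv_nonneg (convex_Ioi 0)
    · intro x hx; exact ((hφd x hx).differentiableAt).continuousAt.continuousWithinAt
    · rw [interior_Ioi]; intro x hx; exact ((hφd x hx).differentiableAt).differentiableWithinAt
    · rw [interior_Ioi]; intro x hx; rw [(hφd x hx).deriv]; exact hψ x hx
  have hφ1 : φ 1 = 0 := by simp [hφdef]
  have hg1 : g 1 = 0 := by simp [hgdef]
  have key : 0 ≤ g t := by
    rcases le_total t 1 with hle | hle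
    · have hanti : AntitoneOn g (Set.Ioc (0:ℝ) 1) := by
        apply antitoneOn_of_deriv_nonpos (convex_Ioc 0 1)
        · intro x hx; exact ((hg x hx.1).differentiableAt).continuousAt.continuousWithinAt
        · rw [interior_Ioc]; intro x hx; exact ((hg x hx.1).differentiableAt).differentiableWithinAt
        · rw [interior_Ioc]; intro x hx
          rw [(hg x hx.1).deriv]
          have := hφmono (Set.mem_Ioi.2 hx.1) (Set.mem_Ioi.2 one_pos) hx.2.le
          rwa [hφ1] at this
      have := hanti (Set.mem_Ioc.2 ⟨ht, hle⟩) (Set.mem_Ioc.2 ⟨one_pos, le_refl 1⟩) hle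
      rwa [hg1] at this
    · have hmono : MonotoneOn g (Set.Ici (1:ℝ)) := by
        apply monotoneOn_of_deriv_nonneg (convex_Ici 1)
        · intro x hx; exact ((hg x (lt_of_lt_of_le one_pos hx)).differentiableAt).continuousAt.continuousWithinAt
        · rw [interior_Ici]; intro x hx
          exact ((hg x (lt_trans one_pos hx)).differentiableAt).differentiableWithinAt
        · rw [interior_Ici]; intro x hx
          rw [(hg x (lt_trans one_pos hx)).deriv]
          have := hφmono (Set.mem_Ioi.2 one_pos) (Set.mem_Ioi.2 (lt_trans one_pos hx)) hx.le
          rwa [hφ1] at this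
      have := hmono (Set.mem_Ici.2 (le_refl 1)) (Set.mem_Ici.2 hle) hle
      rwa [hg1] at this
  rw [hgdef] at key
  simp only at key
  linarith

lemma pointwise {p q : ℝ} (hp : 0 ≤ p) (hq : 0 ≤ q) (hac : q = 0 → p = 0) :
    3/2 * (p - q)^2 / (p + 2*q) ≤ p * Real.log (p / q) - p + q := by
  rcases eq_or_lt_of_le hq with hq0 | hq0
  · have hp0 := hac hq0.symm
    simp [← hq0, hp0]
  rcases eq_or_lt_of_le hp with hp0 | hp0
  · rw [← hp0]
    have h1 : 3/2 * ((0:ℝ) - q)^2 / (0 + 2*q) = 3/4 * q := by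
      field_simp; ring
    rw [h1]; simp; linarith
  · have ht : 0 < p / q := div_pos hp0 hq0
    have h := scalar1 ht
    have h2 := mul_le_mul_of_nonneg_left h hq
    have e1 : q * (3/2 * (p/q - 1)^2 / (p/q + 2)) = 3/2 * (p - q)^2 / (p + 2*q) := by
      field_simp
    have e2 : q * (p/q * Real.log (p/q) - p/q + 1) = p * Real.log (p/q) - p + q := by
      field_simp
    rw [e1, e2] at h2
    exact h2

/-- Pinsker's inequality: for two pmfs `P`, `Q` on a finite set with `P` absolutely
continuous with respect to `Q`, the relative entropy (in bits) satisfies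
`D(P‖Q) ≥ ‖P−Q‖₁² / (2 log 2)`. -/
theorem stmt_1 {X : Type*} [Fintype X]
    (P Q : X → ℝ) (hP0 : ∀ x, 0 ≤ P x) (hQ0 : ∀ x, 0 ≤ Q x)
    (hP1 : ∑ x, P x = 1) (hQ1 : ∑ x, Q x = 1)
    (hac : ∀ x, Q x = 0 → P x = 0) :
    (∑ x, |P x - Q x|) ^ 2 / (2 * Real.log 2) ≤ ∑ x, P x * Real.logb 2 (P x / Q x) := by
  have hlog2 : (0:ℝ) < Real.log 2 := Real.log_pos one_lt_two
  set D := ∑ x, P x * Real.log (P x / Q x) with hD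
  set S := ∑ x, (P x - Q x)^2 / (P x + 2*Q x) with hS
  have hSnn : 0 ≤ S := Finset.sum_nonneg fun x _ => div_nonneg (sq_nonneg _) (by linarith [hP0 x, hQ0 x])
  -- Step 1: lower bound on D
  have h1 : 3/2 * S ≤ D := by
    rw [hS, Finset.mul_sum]
    calc ∑ x, 3/2 * ((P x - Q x)^2 / (P x + 2*Q x))
        ≤ ∑ x, (P x * Real.log (P x / Q x) - P x + Q x) := by
          apply Finset.sum_le_sum
          intro x _
          have := pointwise (hP0 x) (hQ0 x) (hac x)
          rw [mul_div_assoc] at this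
          exact this
      _ = D := by
          rw [Finset.sum_add_distrib, Finset.sum_sub_distrib, hP1, hQ1, hD]
          ring
  -- Step 2: Cauchy-Schwarz
  have hCS : (∑ x, |P x - Q x|) ^ 2 ≤ (∑ x, (P x + 2 * Q x)) * S := by
    apply Finset.sum_sq_le_sum_mul_sum_of_sq_eq_mul
    · intro i _; have := hP0 i; have := hQ0 i; linarith
    · intro i _; exact div_nonneg (sq_nonneg _) (by linarith [hP0 i, hQ0 i])
    · intro i _
      rcases eq_or_lt_of_le (by have := hP0 i; have := hQ0 i; linarith :
          (0:ℝ) ≤ P i + 2 * Q i) with h0 | h0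
      · have hq : Q i = 0 := by have := hP0 i; have := hQ0 i; linarith
        have hp : P i = 0 := hac i hq
        simp [hp, hq]
      · rw [sq_abs]
        field_simp
        rw [mul_div_cancel_right₀ _ (by linarith : P i + Q i * 2 ≠ 0)]
  have hsum3 : (∑ x, (P x + 2 * Q x)) = 3 := by
    rw [Finset.sum_add_distrib, hP1, ← Finset.mul_sum, hQ1]
    norm_num
  rw [hsum3] at hCS
  -- Combine: (∑|P-Q|)^2 ≤ 3S ≤ 2D
  have h2 : (∑ x, |P x - Q x|) ^ 2 ≤ 2 * D := by nlinarith
  -- convert to bits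
  have h3 : ∑ x, P x * Real.logb 2 (P x / Q x) = D / Real.log 2 := by
    rw [hD, Finset.sum_div]
    congr 1
    ext x
    rw [Real.logb, mul_div_assoc]
  rw [h3, div_le_div_iff₀ (by positivity) hlog2]
  nlinarith
end

section
/- Let G be a graph with vertex set V and let G_f be its factor graph (bipartite graph on V ∪ C where C is the set of maximal cliques of G, with an edge {v,c} iff v ∈ c). Then for every pair of vertices i, j ∈ V, the graph distance in G_f equals twice the graph distance in G: d_f(i,j) = 2·d(i,j). -/
/-- The maximal cliques of a graph, as finite vertex sets. -/
def maximalCliques {V : Type*} (G : SimpleGraph V) : Set (Finset V) :=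
  {c | G.IsClique (c : Set V) ∧ ∀ t : Finset V, G.IsClique (t : Set V) → c ⊆ t → c = t}

/-- The factor graph of `G`: a bipartite graph on `V ⊕ C`, where `C` is the set of maximal
cliques of `G`, with an edge `{v, c}` iff `v ∈ c`. -/
def factorGraph {V : Type*} [DecidableEq V] (G : SimpleGraph V) :
    SimpleGraph (V ⊕ (maximalCliques G)) where
  Adj a b :=
    match a, b with
    | Sum.inl v, Sum.inr c => v ∈ c.1
    | Sum.inr c, Sum.inl v => v ∈ c.1
    | _, _ => False
  symm := ⟨by rintro (v | c) (w | d) h <;> simp_all⟩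
  loopless := ⟨by rintro (v | c) h <;> simp_all⟩

set_option linter.unusedSectionVars false

section aux
variable {V : Type*} [Fintype V] [DecidableEq V] (G : SimpleGraph V)

lemma fg_adj_ll {u v : V} (h : (factorGraph G).Adj (Sum.inl u) (Sum.inl v)) : False := h
lemma fg_adj_rr {c d : maximalCliques G} (h : (factorGraph G).Adj (Sum.inr c) (Sum.inr d)) : False := h
lemma fg_adj_lr {u : V} {c : maximalCliques G} : (factorGraph G).Adj (Sum.inl u) (Sum.inr c) ↔ u ∈ c.1 := Iff.rfl
lemma fg_adj_rl {u : V} {c : maximalCliques G} : (factorGraph G).Adj (Sum.inr c) (Sum.inl u) ↔ u ∈ c.1 := Iff.rfl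

lemma exists_maxclique {s : Finset V} (hs : G.IsClique (s : Set V)) :
    ∃ c ∈ maximalCliques G, s ⊆ c := by
  classical
  obtain ⟨a, haS, hmax⟩ := Set.Finite.exists_maximalFor id
    {t : Finset V | G.IsClique (t : Set V) ∧ s ⊆ t} (Set.toFinite _) ⟨s, hs, le_refl s⟩
  refine ⟨a, ⟨haS.1, ?_⟩, haS.2⟩
  intro t ht hat
  exact le_antisymm hat (hmax ⟨ht, haS.2.trans hat⟩ hat)

lemma walk_up {u v : V} (q : G.Walk u v) :
    ∃ p : (factorGraph G).Walk (Sum.inl u) (Sum.inl v), p.length = 2 * q.length := by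
  induction q with
  | nil => exact ⟨.nil, rfl⟩
  | cons h q ih =>
    rename_i a b w
    obtain ⟨p, hp⟩ := ih
    have hcl : G.IsClique (({a, b} : Finset V) : Set V) := by
      simp only [Finset.coe_insert, Finset.coe_singleton]
      exact SimpleGraph.isClique_pair.2 fun _ => h
    obtain ⟨c, hc, hsub⟩ := exists_maxclique G hcl
    have ha : a ∈ c := hsub (by simp)
    have hb : b ∈ c := hsub (by simp)
    refine ⟨.cons (fg_adj_lr G |>.2 ha : (factorGraph G).Adj _ (Sum.inr ⟨c, hc⟩))
      (.cons ((fg_adj_rl G).2 hb) p), ?_⟩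
    simp [hp]; ring

lemma walk_down : ∀ (n : ℕ) (u j : V) (p : (factorGraph G).Walk (Sum.inl u) (Sum.inl j)),
    p.length ≤ n → ∃ q : G.Walk u j, 2 * q.length ≤ p.length := by
  intro n
  induction n with
  | zero =>
    intro u j p hp
    cases p with
    | nil => exact ⟨.nil, by simp⟩
    | cons h p' => simp at hp
  | succ n ih =>
    intro u j p hp
    cases p with
    | nil => exact ⟨.nil, by simp⟩
    | cons h p' =>
      rename_i b
      match b, h with
      | Sum.inr c, h =>
        cases p' with
        | cons h2 p2 =>
          rename_i b2
          match b2, h2 with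
          | Sum.inl w, h2 =>
            have hlen : p2.length ≤ n := by
              simp only [SimpleGraph.Walk.length_cons] at hp; omega
            obtain ⟨q, hq⟩ := ih w j p2 hlen
            by_cases huw : u = w
            · subst huw
              exact ⟨q, by simp only [SimpleGraph.Walk.length_cons]; omega⟩
            · have hadj : G.Adj u w := c.2.1 h h2 huw
              exact ⟨.cons hadj q, by simp only [SimpleGraph.Walk.length_cons]; omega⟩

end aux

/-- Distances in the factor graph are twice the distances in the original graph:
for all `i, j ∈ V` in a common connected component, `d_f(i, j) = 2 d(i, j)`. -/
theorem stmt_3 {V : Type*} [Fintype V] [DecidableEq V] (G : SimpleGraph V) (i j : V)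
    (hreach : G.Reachable i j) :
    (factorGraph G).dist (Sum.inl i) (Sum.inl j) = 2 * G.dist i j := by
  obtain ⟨q, hq⟩ := hreach.exists_walk_length_eq_dist
  obtain ⟨p, hp⟩ := walk_up G q
  have hreach_f : (factorGraph G).Reachable (Sum.inl i) (Sum.inl j) := ⟨p⟩
  have hub : (factorGraph G).dist (Sum.inl i) (Sum.inl j) ≤ 2 * G.dist i j := by
    rw [← hq, ← hp]; exact SimpleGraph.dist_le p
  have hlb : 2 * G.dist i j ≤ (factorGraph G).dist (Sum.inl i) (Sum.inl j) := by
    obtain ⟨p', hp'⟩ := hreach_f.exists_walk_length_eq_dist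
    obtain ⟨q', hq'⟩ := walk_down G p'.length i j p' le_rfl
    calc 2 * G.dist i j ≤ 2 * q'.length := by
          have := SimpleGraph.dist_le q'; omega
      _ ≤ p'.length := hq'
      _ = _ := hp'
  omega
end

section
/- Let P be the distribution of a graphical model on G(V,E) given by a product of edge potentials, let A, B, C partition V with B separating A from C in G, and let P̃ be the distribution of the induced model on the subgraph of G induced by A ∪ B with the same edge potentials. Then for every D ⊆ A and all configurations, P(x_D | x_B) = P̃(x_D | x_B). -/
/-- Unnormalized weight of a configuration under pairwise edge potentials on `G`. -/
noncomputable def edgeWeight {V 𝒳 : Type*} [Fintype V] [LinearOrder V]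
    (G : SimpleGraph V) [DecidableRel G.Adj] (Φ : V → V → 𝒳 → 𝒳 → ℝ) (z : V → 𝒳) : ℝ :=
  ∏ p ∈ Finset.univ.filter (fun p : V × V => p.1 < p.2 ∧ G.Adj p.1 p.2),
    Φ p.1 p.2 (z p.1) (z p.2)

/-- Unnormalized marginal of a weight function `f` on the coordinates in `S`, at the
restriction of `x`. -/
noncomputable def mgw {V 𝒳 : Type*} [Fintype V] [DecidableEq V] [Fintype 𝒳] [DecidableEq 𝒳]
    (f : (V → 𝒳) → ℝ) (S : Finset V) (x : V → 𝒳) : ℝ :=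
  ∑ z : V → 𝒳, if ∀ v ∈ S, z v = x v then f z else 0

/-- Factorization of a marginal of a product weight, when one factor only depends on
coordinates in `A ∪ B` and the other only depends on coordinates outside `A`. -/
lemma mgw_factor {V 𝒳 : Type*} [Fintype V] [DecidableEq V] [Fintype 𝒳] [DecidableEq 𝒳]
    (A B : Finset V) (hAB : Disjoint A B) (E : Finset V) (hE : E ⊆ A)
    (F H : (V → 𝒳) → ℝ)
    (hF : ∀ z w : V → 𝒳, (∀ v, (v ∈ A ∨ v ∈ B) → z v = w v) → F z = F w)
    (hH : ∀ z w : V → 𝒳, (∀ v, v ∉ A → z v = w v) → H z = H w)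
    (x : V → 𝒳) :
    mgw (fun z => F z * H z) (E ∪ B) x =
      (∑ p : {v : V // v ∈ A} → 𝒳,
        if ∀ v : {v : V // v ∈ A}, ↑v ∈ E → p v = x ↑v
        then F (fun v => if h : v ∈ A then p ⟨v, h⟩ else x v) else 0) *
      (∑ q : {v : V // ¬ v ∈ A} → 𝒳,
        if ∀ v : {v : V // ¬ v ∈ A}, ↑v ∈ B → q v = x ↑v
        then H (fun v => if h : v ∈ A then x v else q ⟨v, h⟩) else 0) := by
  classical
  let e := (Equiv.piEquivPiSubtypeProd (fun v : V => v ∈ A) (fun _ => 𝒳))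
  rw [mgw, ← e.symm.sum_comp, Fintype.sum_prod_type, Finset.sum_mul_sum]
  refine Finset.sum_congr rfl fun p _ => Finset.sum_congr rfl fun q _ => ?_
  have hm : ∀ v, e.symm (p, q) v = if h : v ∈ A then p ⟨v, h⟩ else q ⟨v, h⟩ := fun v => rfl
  by_cases h1 : ∀ v : {v : V // v ∈ A}, ↑v ∈ E → p v = x ↑v
  · by_cases h2 : ∀ v : {v : V // ¬ v ∈ A}, ↑v ∈ B → q v = x ↑v
    · have hc : ∀ v ∈ E ∪ B, e.symm (p, q) v = x v := by
        intro v hv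
        rw [hm]
        rcases Finset.mem_union.1 hv with hv | hv
        · rw [dif_pos (hE hv)]; exact h1 ⟨v, hE hv⟩ hv
        · have hvA : v ∉ A := fun hvA => Finset.disjoint_left.1 hAB hvA hv
          rw [dif_neg hvA]; exact h2 ⟨v, hvA⟩ hv
      rw [if_pos hc, if_pos h1, if_pos h2]
      congr 1
      · refine hF _ _ fun v hv => ?_
        rw [hm]
        rcases hv with hv | hv
        · rw [dif_pos hv, dif_pos hv]
        · have hvA : v ∉ A := fun hvA => Finset.disjoint_left.1 hAB hvA hv
          rw [dif_neg hvA, dif_neg hvA]; exact h2 ⟨v, hvA⟩ hv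
      · refine hH _ _ fun v hv => ?_
        rw [hm, dif_neg hv, dif_neg hv]
    · rw [if_neg h2, mul_zero, if_neg]
      intro hc
      refine h2 fun v hv => ?_
      have := hc ↑v (Finset.mem_union_right _ hv)
      rwa [hm, dif_neg v.2, Subtype.eta] at this
  · rw [if_neg h1, zero_mul, if_neg]
    intro hc
    refine h1 fun v hv => ?_
    have := hc ↑v (Finset.mem_union_left _ (hv))
    rwa [hm, dif_pos v.2, Subtype.eta] at this

/-- Markov-blanket restriction lemma: if `A, B, C` partition `V`, `B` separates `A` from `C`
in `G`, `P` is the graphical model on `G` with strictly positive edge potentials `Φ`, and `P̃`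
is the model on the subgraph induced by `A ∪ B` with the same potentials, then for every
`D ⊆ A` and every configuration `x`, `P(x_D | x_B) = P̃(x_D | x_B)`. -/
theorem stmt_4 {V 𝒳 : Type*} [Fintype V] [LinearOrder V] [Fintype 𝒳] [DecidableEq 𝒳]
    (G : SimpleGraph V) [DecidableRel G.Adj]
    (Φ : V → V → 𝒳 → 𝒳 → ℝ) (hΦ : ∀ i j a b, 0 < Φ i j a b)
    (A B C : Finset V)
    (hpart : A ∪ B ∪ C = Finset.univ)
    (hAB : Disjoint A B) (hAC : Disjoint A C) (hBC : Disjoint B C)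
    (hsep : ∀ a ∈ A, ∀ c ∈ C, ∀ p : G.Walk a c, ∃ v ∈ B, v ∈ p.support)
    (D : Finset V) (hD : D ⊆ A) (x : V → 𝒳) :
    mgw (edgeWeight G Φ) (D ∪ B) x / mgw (edgeWeight G Φ) B x =
      mgw (edgeWeight (G.induce (↑(A ∪ B) : Set V)).spanningCoe Φ) (D ∪ B) x /
        mgw (edgeWeight (G.induce (↑(A ∪ B) : Set V)).spanningCoe Φ) B x := by
  classical
  -- the two factors of the edge weight
  set F : (V → 𝒳) → ℝ := fun z =>
    ∏ p ∈ (Finset.univ.filter (fun p : V × V => p.1 < p.2 ∧ G.Adj p.1 p.2)).filter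
        (fun p => p.1 ∈ A ∪ B ∧ p.2 ∈ A ∪ B), Φ p.1 p.2 (z p.1) (z p.2) with hFdef
  set H : (V → 𝒳) → ℝ := fun z =>
    ∏ p ∈ (Finset.univ.filter (fun p : V × V => p.1 < p.2 ∧ G.Adj p.1 p.2)).filter
        (fun p => ¬(p.1 ∈ A ∪ B ∧ p.2 ∈ A ∪ B)), Φ p.1 p.2 (z p.1) (z p.2) with hHdef
  have hsplit : edgeWeight G Φ = fun z => F z * H z := by
    funext z
    exact (Finset.prod_filter_mul_prod_filter_not _ _ _).symm
  -- adjacency in the induced graph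
  have hadj' : ∀ a b : V, (G.induce (↑(A ∪ B) : Set V)).spanningCoe.Adj a b ↔
      G.Adj a b ∧ a ∈ A ∪ B ∧ b ∈ A ∪ B := by
    intro a b
    constructor
    · rintro ⟨-, ⟨u, hu⟩, ⟨v, hv⟩, hadj, rfl, rfl⟩
      exact ⟨hadj, Finset.mem_coe.1 hu, Finset.mem_coe.1 hv⟩
    · rintro ⟨hadj, ha, hb⟩
      exact ⟨hadj.ne, ⟨a, Finset.mem_coe.2 ha⟩, ⟨b, Finset.mem_coe.2 hb⟩, hadj, rfl, rfl⟩
  have hind : edgeWeight (G.induce (↑(A ∪ B) : Set V)).spanningCoe Φ = fun z => F z * 1 := by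
    funext z
    rw [mul_one, edgeWeight, hFdef]
    apply Finset.prod_congr _ (fun _ _ => rfl)
    rw [Finset.filter_filter]
    apply Finset.filter_congr
    intro p _
    simp only [hadj', and_assoc]
  -- edges not inside A ∪ B avoid A entirely
  have hC : ∀ v : V, v ∉ A ∪ B → v ∈ C := by
    intro v hv
    have hv' : v ∈ A ∪ B ∪ C := hpart ▸ Finset.mem_univ v
    rcases Finset.mem_union.1 hv' with h | h
    · exact absurd h hv
    · exact h
  have key : ∀ a b : V, G.Adj a b → a ∈ A → b ∈ C → False := by
    intro a b hab ha hb
    obtain ⟨v, hvB, hvs⟩ := hsep a ha b hb hab.toWalk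
    have : v = a ∨ v = b := by
      simpa [SimpleGraph.Adj.toWalk, SimpleGraph.Walk.support_cons] using hvs
    rcases this with rfl | rfl
    · exact Finset.disjoint_left.1 hAB ha hvB
    · exact Finset.disjoint_left.1 hBC hvB hb
  have hedge : ∀ i j : V, G.Adj i j → ¬(i ∈ A ∪ B ∧ j ∈ A ∪ B) → i ∉ A ∧ j ∉ A := by
    intro i j hadj hn
    constructor
    · intro hiA
      have hj : j ∉ A ∪ B := fun hj => hn ⟨Finset.mem_union_left _ hiA, hj⟩
      exact key i j hadj hiA (hC j hj)
    · intro hjA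
      have hi : i ∉ A ∪ B := fun hi => hn ⟨hi, Finset.mem_union_left _ hjA⟩
      exact key j i hadj.symm hjA (hC i hi)
  -- dependence properties
  have hF : ∀ z w : V → 𝒳, (∀ v, (v ∈ A ∨ v ∈ B) → z v = w v) → F z = F w := by
    intro z w h
    refine Finset.prod_congr rfl fun p hp => ?_
    obtain ⟨-, h1, h2⟩ := Finset.mem_filter.1 hp
    rw [h _ (Finset.mem_union.1 h1), h _ (Finset.mem_union.1 h2)]
  have hH : ∀ z w : V → 𝒳, (∀ v, v ∉ A → z v = w v) → H z = H w := by
    intro z w h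
    refine Finset.prod_congr rfl fun p hp => ?_
    obtain ⟨hp', hn⟩ := Finset.mem_filter.1 hp
    obtain ⟨-, hadj⟩ := Finset.mem_filter.1 hp'
    obtain ⟨h1, h2⟩ := hedge p.1 p.2 hadj.2 hn
    rw [h _ h1, h _ h2]
  -- abbreviations for the factors
  set SD : ℝ := ∑ p : {v : V // v ∈ A} → 𝒳,
      if ∀ v : {v : V // v ∈ A}, ↑v ∈ D → p v = x ↑v
      then F (fun v => if h : v ∈ A then p ⟨v, h⟩ else x v) else 0 with hSD
  set S0 : ℝ := ∑ p : {v : V // v ∈ A} → 𝒳,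
      if ∀ v : {v : V // v ∈ A}, ↑v ∈ (∅ : Finset V) → p v = x ↑v
      then F (fun v => if h : v ∈ A then p ⟨v, h⟩ else x v) else 0 with hS0
  set T : ℝ := ∑ q : {v : V // ¬ v ∈ A} → 𝒳,
      if ∀ v : {v : V // ¬ v ∈ A}, ↑v ∈ B → q v = x ↑v
      then H (fun v => if h : v ∈ A then x v else q ⟨v, h⟩) else 0 with hT
  set N : ℝ := ∑ q : {v : V // ¬ v ∈ A} → 𝒳,
      if ∀ v : {v : V // ¬ v ∈ A}, ↑v ∈ B → q v = x ↑v
      then (fun _ : V → 𝒳 => (1:ℝ)) (fun v => if h : v ∈ A then x v else q ⟨v, h⟩) else 0 with hN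
  have hBeq : B = ∅ ∪ B := (Finset.empty_union B).symm
  have L1 : mgw (edgeWeight G Φ) (D ∪ B) x = SD * T := by
    rw [hsplit]; exact mgw_factor A B hAB D hD F H hF hH x
  have L2 : mgw (edgeWeight G Φ) B x = S0 * T := by
    rw [hsplit, hBeq]
    exact mgw_factor A B hAB ∅ (Finset.empty_subset A) F H hF hH x
  have L3 : mgw (edgeWeight (G.induce (↑(A ∪ B) : Set V)).spanningCoe Φ) (D ∪ B) x
      = SD * N := by
    rw [hind]
    exact mgw_factor A B hAB D hD F (fun _ => (1:ℝ)) hF (fun _ _ _ => rfl) x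
  have L4 : mgw (edgeWeight (G.induce (↑(A ∪ B) : Set V)).spanningCoe Φ) B x
      = S0 * N := by
    rw [hind, hBeq]
    exact mgw_factor A B hAB ∅ (Finset.empty_subset A) F (fun _ => (1:ℝ)) hF (fun _ _ _ => rfl) x
  have hHpos : ∀ z : V → 𝒳, 0 < H z :=
    fun z => Finset.prod_pos fun p _ => hΦ _ _ _ _
  have hTpos : 0 < T := by
    rw [hT]
    refine Finset.sum_pos' (fun q _ => ?_) ⟨fun v => x ↑v, Finset.mem_univ _, ?_⟩
    · split
      · exact le_of_lt (hHpos (fun v => if h : v ∈ A then x v else q ⟨v, h⟩))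
      · exact le_refl 0
    · rw [if_pos fun v _ => rfl]
      exact hHpos (fun v => if h : v ∈ A then x v else (fun v : {v : V // ¬ v ∈ A} => x ↑v) ⟨v, h⟩)
  have hNpos : 0 < N := by
    rw [hN]
    refine Finset.sum_pos' (fun q _ => ?_) ⟨fun v => x ↑v, Finset.mem_univ _, ?_⟩
    · split
      · exact zero_le_one
      · exact le_refl 0
    · rw [if_pos fun v _ => rfl]
      exact zero_lt_one
  rw [L1, L2, L3, L4, mul_div_mul_right _ _ hTpos.ne', mul_div_mul_right _ _ hNpos.ne']
end

section
/- In a tree Ising model with root r, leaves L, and all positive edge parameters θ_{ij} > 0, the quantity P(X_r = 1 | X_L = x_L) is monotonically non-decreasing in each coordinate x_l of x_L (flipping any leaf from −1 to +1 does not decrease it). -/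
/-- Spin value of a Boolean configuration entry: `true ↦ +1`, `false ↦ −1`. -/
noncomputable def val (b : Bool) : ℝ := if b then 1 else -1

/-- Unnormalized Ising weight `∏_{edges {u,v}} exp(θ_{uv} x_u x_v)` of a configuration. -/
noncomputable def isingWeight {V : Type*} [Fintype V] [LinearOrder V]
    (G : SimpleGraph V) [DecidableRel G.Adj] (θ : V → V → ℝ) (σ : V → Bool) : ℝ :=
  ∏ p ∈ Finset.univ.filter (fun p : V × V => p.1 < p.2 ∧ G.Adj p.1 p.2),
    Real.exp (θ p.1 p.2 * val (σ p.1) * val (σ p.2))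


lemma isingWeight_pos {V : Type*} [Fintype V] [LinearOrder V]
    (G : SimpleGraph V) [DecidableRel G.Adj] (θ : V → V → ℝ) (σ : V → Bool) :
    0 < isingWeight G θ σ :=
  Finset.prod_pos fun _ _ => Real.exp_pos _

lemma isingWeight_supermod {V : Type*} [Fintype V] [LinearOrder V]
    (G : SimpleGraph V) [DecidableRel G.Adj] (θ : V → V → ℝ)
    (hθ : ∀ i j, G.Adj i j → 0 < θ i j) (a b : V → Bool) :
    isingWeight G θ a * isingWeight G θ b ≤
      isingWeight G θ (a ⊓ b) * isingWeight G θ (a ⊔ b) := by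
  unfold isingWeight
  rw [← Finset.prod_mul_distrib, ← Finset.prod_mul_distrib]
  apply Finset.prod_le_prod
  · intro p _; positivity
  · intro p hp
    simp only [Finset.mem_filter] at hp
    have hθp : (0:ℝ) ≤ θ p.1 p.2 := (hθ _ _ hp.2.2).le
    rw [← Real.exp_add, ← Real.exp_add]
    apply Real.exp_le_exp.mpr
    simp only [Pi.inf_apply, Pi.sup_apply]
    cases ha1 : a p.1 <;> cases ha2 : a p.2 <;> cases hb1 : b p.1 <;> cases hb2 : b p.2 <;>
      simp [val] <;> nlinarith [hθp]

lemma condProb_mono {V : Type*} [Fintype V] [LinearOrder V]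
    (G : SimpleGraph V) [DecidableRel G.Adj]
    (r : V) (L : Finset V) (hrL : r ∉ L)
    (θ : V → V → ℝ) (hθ : ∀ i j, G.Adj i j → 0 < θ i j)
    (l : V) (hl : l ∈ L) (hlr : l ≠ r) (y : V → Bool) :
    (∑ σ : V → Bool, if (∀ v ∈ L, σ v = Function.update y l false v) ∧ σ r = true
        then isingWeight G θ σ else 0) /
    (∑ σ : V → Bool, if ∀ v ∈ L, σ v = Function.update y l false v
        then isingWeight G θ σ else 0) ≤
    (∑ σ : V → Bool, if (∀ v ∈ L, σ v = Function.update y l true v) ∧ σ r = true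
        then isingWeight G θ σ else 0) /
    (∑ σ : V → Bool, if ∀ v ∈ L, σ v = Function.update y l true v
        then isingWeight G θ σ else 0) := by
  classical
  set w := isingWeight G θ with hw
  -- condition rewriting
  have cond_iff : ∀ (σ : V → Bool) (c : Bool),
      (∀ v ∈ L, σ v = Function.update y l c v) ↔
        ((∀ v ∈ L.erase l, σ v = y v) ∧ σ l = c) := by
    intro σ c
    constructor
    · intro h
      refine ⟨fun v hv => ?_, by simpa using h l hl⟩
      have := h v (Finset.mem_of_mem_erase hv)
      rwa [Function.update_of_ne (Finset.ne_of_mem_erase hv)] at this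
    · rintro ⟨h1, h2⟩ v hv
      by_cases hvl : v = l
      · subst hvl; simpa using h2
      · rw [Function.update_of_ne hvl]
        exact h1 v (Finset.mem_erase.2 ⟨hvl, hv⟩)
  -- the four constrained sums
  set Q : Bool → Bool → ℝ := fun c b =>
    ∑ σ : V → Bool, if (∀ v ∈ L.erase l, σ v = y v) ∧ σ l = c ∧ σ r = b then w σ else 0
    with hQ
  have hQpos : ∀ c b, 0 < Q c b := by
    intro c b
    apply Finset.sum_pos'
    · intro σ _; split <;> [exact (isingWeight_pos G θ σ).le; rfl]
    · refine ⟨Function.update (Function.update y l c) r b, Finset.mem_univ _, ?_⟩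
      have hcond : (∀ v ∈ L.erase l,
          Function.update (Function.update y l c) r b v = y v) ∧
          Function.update (Function.update y l c) r b l = c ∧
          Function.update (Function.update y l c) r b r = b := by
        refine ⟨fun v hv => ?_, ?_, by simp⟩
        · have hvl : v ≠ l := Finset.ne_of_mem_erase hv
          have hvr : v ≠ r := by
            intro h; exact hrL (h ▸ Finset.mem_of_mem_erase hv)
          rw [Function.update_of_ne hvr, Function.update_of_ne hvl]
        · rw [Function.update_of_ne hlr, Function.update_self]
      rw [if_pos hcond]
      exact isingWeight_pos G θ _
  -- FKG via four functions theorem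
  have fkg : Q false true * Q true false ≤ Q false false * Q true true := by
    have h4 := four_functions_theorem_univ
      (fun σ : V → Bool => if (∀ v ∈ L.erase l, σ v = y v) ∧ σ l = false ∧ σ r = true
          then w σ else 0)
      (fun σ : V → Bool => if (∀ v ∈ L.erase l, σ v = y v) ∧ σ l = true ∧ σ r = false
          then w σ else 0)
      (fun σ : V → Bool => if (∀ v ∈ L.erase l, σ v = y v) ∧ σ l = false ∧ σ r = false
          then w σ else 0)
      (fun σ : V → Bool => if (∀ v ∈ L.erase l, σ v = y v) ∧ σ l = true ∧ σ r = true
          then w σ else 0)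
      (fun σ => by dsimp; split <;> [exact (isingWeight_pos G θ σ).le; rfl])
      (fun σ => by dsimp; split <;> [exact (isingWeight_pos G θ σ).le; rfl])
      (fun σ => by dsimp; split <;> [exact (isingWeight_pos G θ σ).le; rfl])
      (fun σ => by dsimp; split <;> [exact (isingWeight_pos G θ σ).le; rfl])
      ?_
    · exact h4
    intro a b
    by_cases ha : (∀ v ∈ L.erase l, a v = y v) ∧ a l = false ∧ a r = true
    · by_cases hb : (∀ v ∈ L.erase l, b v = y v) ∧ b l = true ∧ b r = false
      · rw [if_pos ha, if_pos hb, if_pos, if_pos]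
        · exact isingWeight_supermod G θ hθ a b
        · refine ⟨fun v hv => ?_, ?_, ?_⟩
          · simp [Pi.sup_apply, ha.1 v hv, hb.1 v hv]
          · simp [Pi.sup_apply, ha.2.1, hb.2.1]
          · simp [Pi.sup_apply, ha.2.2, hb.2.2]
        · refine ⟨fun v hv => ?_, ?_, ?_⟩
          · simp [Pi.inf_apply, ha.1 v hv, hb.1 v hv]
          · simp [Pi.inf_apply, ha.2.1, hb.2.1]
          · simp [Pi.inf_apply, ha.2.2, hb.2.2]
      · rw [if_neg hb, mul_zero]
        apply mul_nonneg <;> (split <;> [exact (isingWeight_pos G θ _).le; rfl])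
    · rw [if_neg ha, zero_mul]
      apply mul_nonneg <;> (split <;> [exact (isingWeight_pos G θ _).le; rfl])
  -- rewrite the four sums in the goal
  have num_eq : ∀ c : Bool,
      (∑ σ : V → Bool, if (∀ v ∈ L, σ v = Function.update y l c v) ∧ σ r = true
          then w σ else 0) = Q c true := by
    intro c
    apply Finset.sum_congr rfl
    intro σ _
    simp only [cond_iff σ c, and_assoc]
  have den_eq : ∀ c : Bool,
      (∑ σ : V → Bool, if (∀ v ∈ L, σ v = Function.update y l c v)
          then w σ else 0) = Q c true + Q c false := by
    intro c
    rw [hQ]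
    rw [← Finset.sum_add_distrib]
    apply Finset.sum_congr rfl
    intro σ _
    simp only [cond_iff σ c]
    by_cases h : (∀ v ∈ L.erase l, σ v = y v) ∧ σ l = c
    · cases hr : σ r
      · rw [if_pos h, if_neg (by simp), if_pos ⟨h.1, h.2, rfl⟩, zero_add]
      · rw [if_pos h, if_pos ⟨h.1, h.2, rfl⟩, if_neg (by simp), add_zero]
    · rw [if_neg h, if_neg (fun hc => h ⟨hc.1, hc.2.1⟩), if_neg (fun hc => h ⟨hc.1, hc.2.1⟩),
        add_zero]
  rw [num_eq false, num_eq true, den_eq false, den_eq true]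
  rw [div_le_div_iff₀ (add_pos (hQpos false true) (hQpos false false)) (add_pos (hQpos true true) (hQpos true false))]
  nlinarith [fkg, (hQpos false true), (hQpos true true), (hQpos false false), (hQpos true false)]


/-- Conditional probability `P(X_r = b | X_L = y|_L)` in the Ising model on `G`. -/
noncomputable def condRootProb {V : Type*} [Fintype V] [LinearOrder V]
    (G : SimpleGraph V) [DecidableRel G.Adj] (θ : V → V → ℝ)
    (r : V) (L : Finset V) (b : Bool) (y : V → Bool) : ℝ :=
  (∑ σ : V → Bool, if (∀ v ∈ L, σ v = y v) ∧ σ r = b then isingWeight G θ σ else 0) /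
    (∑ σ : V → Bool, if ∀ v ∈ L, σ v = y v then isingWeight G θ σ else 0)

/-- In a tree Ising model with root `r`, leaf set `L`, and all positive edge parameters,
`P(X_r = 1 | X_L = x_L)` is monotonically non-decreasing in each leaf value `x_l`:
flipping any leaf `l` from `−1` (`false`) to `+1` (`true`) does not decrease it. -/
theorem stmt_6 {V : Type*} [Fintype V] [LinearOrder V]
    (G : SimpleGraph V) [DecidableRel G.Adj] (hT : G.IsTree)
    (r : V) (L : Finset V) (hL : ∀ v, v ∈ L ↔ v ≠ r ∧ G.degree v = 1)
    (θ : V → V → ℝ) (hθ : ∀ i j, G.Adj i j → 0 < θ i j)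
    (l : V) (hl : l ∈ L) (y : V → Bool) :
    condRootProb G θ r L true (Function.update y l false) ≤
      condRootProb G θ r L true (Function.update y l true) := by
  have hrL : r ∉ L := fun h => ((hL r).1 h).1 rfl
  have hlr : l ≠ r := ((hL l).1 hl).1
  exact condProb_mono G r L hrL θ hθ l hl hlr y
end

section
/- Consider a complete D-ary tree Ising model of depth d with all edge parameters equal to θ = (log 2)/(2D), all leaves fixed to +1, and let a(d) = P(X_r = 1 | X_L = 1). Then the recursion a(d+1) = f(a(d)), where f(a) = (e^θ a + e^{−θ}(1−a))^D / ((e^θ a + e^{−θ}(1−a))^D + (e^{−θ} a + e^θ (1−a))^D), satisfies |a(d+1) − 1/2| < e^{−(log 2)/3} · |a(d) − 1/2|. -/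
lemma aux_pow_sub_pow {p q : ℝ} (hq : 0 ≤ q) (hpq : q ≤ p) :
    ∀ n : ℕ, p ^ (n + 1) - q ^ (n + 1) ≤ ((n : ℝ) + 1) * p ^ n * (p - q) := by
  intro n
  induction n with
  | zero => simp
  | succ n ih =>
    have hp : 0 ≤ p := hq.trans hpq
    have h2 : q ^ (n + 1) ≤ p ^ (n + 1) := pow_le_pow_left₀ hq hpq _
    calc p ^ (n + 1 + 1) - q ^ (n + 1 + 1)
        = p * (p ^ (n + 1) - q ^ (n + 1)) + q ^ (n + 1) * (p - q) := by ring
      _ ≤ p * (((n : ℝ) + 1) * p ^ n * (p - q)) + p ^ (n + 1) * (p - q) :=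
          add_le_add (mul_le_mul_of_nonneg_left ih hp)
            (mul_le_mul_of_nonneg_right h2 (by linarith))
      _ = ((n : ℝ) + 1 + 1) * p ^ (n + 1) * (p - q) := by ring
      _ = ((↑(n + 1) : ℝ) + 1) * p ^ (n + 1) * (p - q) := by push_cast; ring

set_option maxHeartbeats 1000000 in
/-- Contraction estimate for the recursion `a(d+1) = f(a(d))` in a complete `D`-ary tree Ising
model with all edge parameters `θ = log 2 / (2D)` and all leaves fixed to `+1`:
`|f(a) − 1/2| < e^{−(log 2)/3} · |a − 1/2|` for `a ∈ (1/2, 1]`. -/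
theorem stmt_9 (D : ℕ) (hD : 1 ≤ D) (θ : ℝ) (hθ : θ = Real.log 2 / (2 * (D : ℝ)))
    (a : ℝ) (ha : 1 / 2 < a) (ha1 : a ≤ 1) :
    |(Real.exp θ * a + Real.exp (-θ) * (1 - a)) ^ D /
        ((Real.exp θ * a + Real.exp (-θ) * (1 - a)) ^ D +
          (Real.exp (-θ) * a + Real.exp θ * (1 - a)) ^ D) - 1 / 2| <
      Real.exp (-(Real.log 2) / 3) * |a - 1 / 2| := by
  have h2 : (0:ℝ) < Real.log 2 := Real.log_pos (by norm_num)
  have hD1 : (1:ℝ) ≤ (D : ℝ) := by exact_mod_cast hD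
  have hDpos : (0:ℝ) < (D : ℝ) := by linarith
  have hθpos : 0 < θ := by rw [hθ]; positivity
  have hθD : 2 * (D : ℝ) * θ = Real.log 2 := by
    rw [hθ]; field_simp
  have hθle : θ ≤ Real.log 2 / 2 := by
    rw [hθ, div_le_div_iff₀ (by linarith) (by norm_num)]
    have := mul_le_mul_of_nonneg_left hD1 h2.le
    linarith
  obtain ⟨x, hxdef⟩ : ∃ x, x = Real.exp θ := ⟨_, rfl⟩
  obtain ⟨y, hydef⟩ : ∃ y, y = Real.exp (-θ) := ⟨_, rfl⟩
  rw [← hxdef, ← hydef]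
  have hx1 : 1 < x := by
    have := Real.add_one_le_exp θ; rw [← hxdef] at this; linarith
  have hy0 : 0 < y := hydef ▸ Real.exp_pos _
  have hxy : x * y = 1 := by
    rw [hxdef, hydef, ← Real.exp_add]; simp
  have hy1 : y < 1 := by
    have h := Real.exp_lt_exp.mpr (show -θ < 0 by linarith)
    rw [Real.exp_zero, ← hydef] at h; exact h
  obtain ⟨p, hpdef⟩ : ∃ p, p = x * a + y * (1 - a) := ⟨_, rfl⟩
  obtain ⟨q, hqdef⟩ : ∃ q, q = y * a + x * (1 - a) := ⟨_, rfl⟩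
  rw [← hpdef, ← hqdef]
  have hq0 : 0 < q := by
    rw [hqdef]
    linarith [mul_pos hy0 (show (0:ℝ) < a by linarith),
      mul_nonneg (show (0:ℝ) ≤ x by linarith) (show (0:ℝ) ≤ 1 - a by linarith)]
  have hqp : q < p := by
    rw [hpdef, hqdef]
    linarith [mul_pos (show (0:ℝ) < x - y by linarith) (show (0:ℝ) < 2 * a - 1 by linarith)]
  have hsum2 : 2 ≤ x + y := by
    have h1 : 0 ≤ y * (x - 1) ^ 2 := mul_nonneg hy0.le (sq_nonneg _)
    have h2' : y * (x - 1) ^ 2 = (x * y) * x - 2 * (x * y) + y := by ring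
    rw [hxy] at h2'
    linarith [h1, h2']
  have hp1 : 1 ≤ p := by
    rw [hpdef]
    linarith [hsum2,
      mul_nonneg (show (0:ℝ) ≤ x - y by linarith) (show (0:ℝ) ≤ a - 1/2 by linarith)]
  have hp0 : 0 < p := by linarith
  have hDne : D ≠ 0 := by omega
  have hqD : q ^ D < p ^ D := pow_lt_pow_left₀ hqp hq0.le hDne
  have hqD0 : 0 < q ^ D := pow_pos hq0 D
  have hpD0 : 0 < p ^ D := pow_pos hp0 D
  have hsum : 0 < p ^ D + q ^ D := by linarith
  -- key polynomial inequality
  have hcast : ((D - 1 : ℕ) : ℝ) + 1 = (D : ℝ) := by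
    have : ((D - 1 : ℕ) : ℝ) = (D : ℝ) - 1 := by
      push_cast [Nat.cast_sub hD]; ring
    rw [this]; ring
  have hkey : p ^ D - q ^ D ≤ (D : ℝ) * p ^ (D - 1) * (p - q) := by
    have h := aux_pow_sub_pow hq0.le hqp.le (D - 1)
    rw [Nat.sub_add_cancel hD, hcast] at h
    exact h
  have hpow : p ^ (D - 1) ≤ p ^ D := pow_le_pow_right₀ hp1 (Nat.sub_le D 1)
  have hkey2 : p ^ D - q ^ D ≤ (D : ℝ) * (p - q) * (p ^ D + q ^ D) := by
    have h1 : (D:ℝ) * p ^ (D-1) * (p - q) ≤ (D:ℝ) * p ^ D * (p - q) :=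
      mul_le_mul_of_nonneg_right (mul_le_mul_of_nonneg_left hpow hDpos.le) (by linarith)
    have h2 : 0 ≤ (D:ℝ) * (p - q) * q ^ D :=
      mul_nonneg (mul_nonneg hDpos.le (by linarith)) hqD0.le
    linarith [hkey, h1, h2]
  have habs1 : |a - 1/2| = a - 1/2 := abs_of_pos (by linarith)
  have hf : p ^ D / (p ^ D + q ^ D) - 1 / 2 = (p ^ D - q ^ D) / (2 * (p ^ D + q ^ D)) := by
    field_simp; ring
  have habs2 : |p ^ D / (p ^ D + q ^ D) - 1 / 2| = (p ^ D - q ^ D) / (2 * (p ^ D + q ^ D)) := by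
    rw [hf, abs_of_pos (div_pos (by linarith) (by linarith))]
  have hstep : (p ^ D - q ^ D) / (2 * (p ^ D + q ^ D)) ≤ (D:ℝ) * (p - q) / 2 := by
    rw [div_le_div_iff₀ (by linarith) (by norm_num)]
    linarith [hkey2]
  -- the contraction constant
  obtain ⟨E, hEdef⟩ : ∃ E, E = Real.exp (-(Real.log 2) / 3) := ⟨_, rfl⟩
  rw [← hEdef]
  have hE0 : 0 < E := hEdef ▸ Real.exp_pos _
  have hE3 : E ^ 3 = 1 / 2 := by
    have hcube : E ^ 3 = E * E * E := by ring
    rw [hcube, hEdef, ← Real.exp_add, ← Real.exp_add,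
      show -(Real.log 2)/3 + -(Real.log 2)/3 + -(Real.log 2)/3 = -(Real.log 2) by ring,
      Real.exp_neg, Real.exp_log (by norm_num : (0:ℝ) < 2)]
    norm_num
  have hE79 : (0.79 : ℝ) < E := by
    have h3 : (0.79:ℝ) ^ 3 < E ^ 3 := by rw [hE3]; norm_num
    exact lt_of_pow_lt_pow_left₀ 3 hE0.le h3
  -- convexity bound on exp θ
  obtain ⟨s, hsdef⟩ : ∃ s, s = Real.exp (Real.log 2 / 2) := ⟨_, rfl⟩
  have hs0 : 0 < s := hsdef ▸ Real.exp_pos _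
  have hs2 : s ^ 2 = 2 := by
    have : s ^ 2 = s * s := by ring
    rw [this, hsdef, ← Real.exp_add,
      show Real.log 2 / 2 + Real.log 2 / 2 = Real.log 2 by ring,
      Real.exp_log (by norm_num : (0:ℝ) < 2)]
  have hs_le : s ≤ 1.41422 := by
    by_contra hcon
    push_neg at hcon
    have key : (s - 1.41422) * (s + 1.41422) = 2 - 1.41422 ^ 2 := by rw [← hs2]; ring
    have hpos := mul_pos (show (0:ℝ) < s - 1.41422 by linarith)
      (show (0:ℝ) < s + 1.41422 by linarith)
    rw [key] at hpos
    norm_num at hpos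
  obtain ⟨lam, hlamdef⟩ : ∃ l, l = 2 * θ / Real.log 2 := ⟨_, rfl⟩
  have hlam0 : 0 ≤ lam := by rw [hlamdef]; positivity
  have hlam1 : lam ≤ 1 := by
    rw [hlamdef, div_le_one h2]; linarith
  have harg : (1 - lam) * (0:ℝ) + lam * (Real.log 2 / 2) = θ := by
    rw [hlamdef]; field_simp; ring
  have hconv := convexOn_exp.2 (Set.mem_univ (0:ℝ)) (Set.mem_univ (Real.log 2 / 2))
    (by linarith : (0:ℝ) ≤ 1 - lam) hlam0 (by ring)
  simp only [smul_eq_mul] at hconv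
  rw [harg, Real.exp_zero] at hconv
  have hxup : x ≤ (1 - lam) * 1 + lam * s := by
    rw [hxdef, hsdef]; exact hconv
  have hylow : 1 - θ ≤ y := by
    have := Real.add_one_le_exp (-θ); rw [← hydef] at this; linarith
  have hxmy : x - y ≤ lam * (s - 1) + θ := by linarith [hxup, hylow]
  have hDlam : (D:ℝ) * lam = 1 := by
    rw [hlamdef]; field_simp; linarith [hθD]
  have hDθ : (D:ℝ) * θ = Real.log 2 / 2 := by linarith [hθD]
  have hfinal : (D:ℝ) * (x - y) < E := by
    have h5 : (D:ℝ) * (lam * (s - 1) + θ) = (s - 1) + Real.log 2 / 2 := by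
      rw [mul_add, ← mul_assoc, hDlam, hDθ]; ring
    have h6 : (D:ℝ) * (x - y) ≤ (s - 1) + Real.log 2 / 2 := by
      rw [← h5]; exact mul_le_mul_of_nonneg_left hxmy hDpos.le
    have hlog : Real.log 2 < 0.6931471808 := Real.log_two_lt_d9
    linarith [hE79, hs_le]
  calc |p ^ D / (p ^ D + q ^ D) - 1 / 2|
      = (p ^ D - q ^ D) / (2 * (p ^ D + q ^ D)) := habs2
    _ ≤ (D:ℝ) * (p - q) / 2 := hstep
    _ = (D:ℝ) * (x - y) * (a - 1/2) := by rw [hpdef, hqdef]; ring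
    _ < E * (a - 1/2) := mul_lt_mul_of_pos_right hfinal (by linarith)
    _ = E * |a - 1/2| := by rw [habs1]
end

section
/- In a tree Ising model with maximum degree D, leaves L, root r, and edge parameters satisfying |θ_{ij}| < (log 2)/(2D) for all edges, one has |P(x_r | x_L) − P(x_r)| < exp(−(log 2)/3 · d(r,L)) for all x_r ∈ {−1,1} and all leaf configurations x_L, where d(r,L) is the distance from r to the nearest leaf. -/
/-- Marginal probability `P(X_r = b)` in the Ising model on `G`. -/
noncomputable def rootMarg {V : Type*} [Fintype V] [LinearOrder V]
    (G : SimpleGraph V) [DecidableRel G.Adj] (θ : V → V → ℝ) (r : V) (b : Bool) : ℝ :=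
  (∑ σ : V → Bool, if σ r = b then isingWeight G θ σ else 0) /
    (∑ σ : V → Bool, isingWeight G θ σ)

open SimpleGraph Finset
set_option linter.unusedSectionVars false

namespace CD

variable {V : Type*} [LinearOrder V] {G : SimpleGraph V}

lemma path_unique (hT : G.IsTree) {a b : V} (P Q : G.Walk a b) (hP : P.IsPath)
    (hQ : Q.IsPath) : P = Q := by
  have := (SimpleGraph.isAcyclic_iff_path_unique.mp hT.IsAcyclic) (⟨P, hP⟩ : G.Path a b) ⟨Q, hQ⟩
  exact congrArg Subtype.val this

lemma path_length (hT : G.IsTree) {a b : V} (P : G.Walk a b) (hP : P.IsPath) :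
    P.length = G.dist a b := by
  obtain ⟨W, hW⟩ := hT.isConnected.exists_walk_length_eq_dist a b
  have hPQ : P = W.bypass := path_unique hT P W.bypass hP W.bypass_isPath
  refine le_antisymm ?_ (SimpleGraph.dist_le P)
  calc P.length = W.bypass.length := by rw [hPQ]
    _ ≤ W.length := W.length_bypass_le
    _ = G.dist a b := hW

lemma dist_split (hT : G.IsTree) {a b c : V} (P : G.Walk a b) (hP : P.IsPath)
    (hc : c ∈ P.support) : G.dist a c + G.dist c b = G.dist a b := by
  have h1 := path_length hT (P.takeUntil c hc) (hP.takeUntil hc)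
  have h2 := path_length hT (P.dropUntil c hc) (hP.dropUntil hc)
  have h3 : (P.takeUntil c hc).length + (P.dropUntil c hc).length = P.length := by
    rw [← SimpleGraph.Walk.length_append, P.take_spec hc]
  rw [h1, h2] at h3
  rw [h3, path_length hT P hP]

lemma adj_dist_one {a b : V} (h : G.Adj a b) : G.dist a b = 1 :=
  SimpleGraph.dist_eq_one_iff_adj.mpr h

/-- master step lemma -/
lemma step (hT : G.IsTree) {p u : V} (h : G.Adj p u) (v : V) :
    G.dist p v = G.dist u v + 1 ∨ G.dist u v = G.dist p v + 1 := by
  obtain ⟨W, hW⟩ := hT.isConnected.exists_walk_length_eq_dist v u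
  set P := W.bypass with hPdef
  have hP : P.IsPath := W.bypass_isPath
  have hPl : P.length = G.dist v u := path_length hT P hP
  by_cases hp : p ∈ P.support
  · right
    have := dist_split hT P hP hp
    have hpu : G.dist p u = 1 := adj_dist_one h
    rw [hpu] at this
    rw [SimpleGraph.dist_comm (G := G) (u := u) (v := v), SimpleGraph.dist_comm (G := G) (u := p) (v := v)]
    omega
  · left
    have hrev : P.reverse.IsPath := hP.reverse
    have hpr : p ∉ P.reverse.support := by
      rw [SimpleGraph.Walk.support_reverse, List.mem_reverse]; exact hp
    have hK : (SimpleGraph.Walk.cons h P.reverse).IsPath := hrev.cons hpr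
    have := path_length hT _ hK
    rw [SimpleGraph.Walk.length_cons, SimpleGraph.Walk.length_reverse, hPl] at this
    rw [← this, SimpleGraph.dist_comm (G := G) (u := v) (v := u)]

/-- unique descending neighbor -/
lemma uniq (hT : G.IsTree) {u a b v : V} (ha : G.Adj u a) (hb : G.Adj u b) (hab : a ≠ b)
    (hda : G.dist a v + 1 = G.dist u v) (hdb : G.dist b v + 1 = G.dist u v) : False := by
  obtain ⟨Wa, hWa⟩ := hT.isConnected.exists_walk_length_eq_dist v a
  obtain ⟨Wb, hWb⟩ := hT.isConnected.exists_walk_length_eq_dist v b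
  set Pa := Wa.bypass with hPa
  set Pb := Wb.bypass with hPb
  have hPaP : Pa.IsPath := Wa.bypass_isPath
  have hPbP : Pb.IsPath := Wb.bypass_isPath
  have hu_a : u ∉ Pa.support := by
    intro hmem
    have := dist_split hT Pa hPaP hmem
    have h1 : G.dist u a = 1 := adj_dist_one ha
    rw [h1] at this
    rw [SimpleGraph.dist_comm (G := G) (u := a) (v := v), SimpleGraph.dist_comm (G := G) (u := u) (v := v)] at hda
    omega
  have hu_b : u ∉ Pb.support := by
    intro hmem
    have := dist_split hT Pb hPbP hmem
    have h1 : G.dist u b = 1 := adj_dist_one hb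
    rw [h1] at this
    rw [SimpleGraph.dist_comm (G := G) (u := b) (v := v), SimpleGraph.dist_comm (G := G) (u := u) (v := v)] at hdb
    omega
  have hKa : (SimpleGraph.Walk.cons ha Pa.reverse).IsPath := by
    refine hPaP.reverse.cons ?_
    rw [SimpleGraph.Walk.support_reverse, List.mem_reverse]; exact hu_a
  have hKb : (SimpleGraph.Walk.cons hb Pb.reverse).IsPath := by
    refine hPbP.reverse.cons ?_
    rw [SimpleGraph.Walk.support_reverse, List.mem_reverse]; exact hu_b
  have heq := path_unique hT _ _ hKa hKb
  have haKa : a ∈ (SimpleGraph.Walk.cons ha Pa.reverse).support := by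
    rw [SimpleGraph.Walk.support_cons]
    right
    rw [SimpleGraph.Walk.support_reverse]
    exact List.mem_reverse.mpr Pa.end_mem_support
  rw [heq] at haKa
  rw [SimpleGraph.Walk.support_cons] at haKa
  rcases List.mem_cons.mp haKa with h1 | h1
  · exact (ha.ne h1.symm).elim
  · rw [SimpleGraph.Walk.support_reverse, List.mem_reverse] at h1
    have := dist_split hT Pb hPbP h1
    have hab0 : G.dist a b = 0 := by
      rw [SimpleGraph.dist_comm (G := G) (u := a) (v := v)] at hda
      rw [SimpleGraph.dist_comm (G := G) (u := b) (v := v)] at hdb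
      omega
    exact hab (hT.isConnected.dist_eq_zero_iff.mp hab0)

lemma descend (hT : G.IsTree) {u v : V} (h : 0 < G.dist u v) :
    ∃ w, G.Adj u w ∧ G.dist w v + 1 = G.dist u v := by
  obtain ⟨W, hW⟩ := hT.isConnected.exists_walk_length_eq_dist u v
  cases W with
  | nil => simp at h
  | cons hadj W' =>
    rename_i w
    refine ⟨w, hadj, ?_⟩
    have h1 : G.dist w v ≤ W'.length := SimpleGraph.dist_le W'
    have h2 : G.dist u v ≤ 1 + G.dist w v := by
      have := hT.isConnected.dist_triangle (u := u) (v := w) (w := v)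
      rw [adj_dist_one hadj] at this
      omega
    rw [SimpleGraph.Walk.length_cons] at hW
    omega

lemma closure (hT : G.IsTree) {u w x z : V} (huw : G.Adj u w)
    (hx : G.dist u x = G.dist w x + 1) (hadj : G.Adj x z) (hz : z ≠ u) :
    G.dist u z = G.dist w z + 1 := by
  have cc : ∀ a b : V, G.dist a b = G.dist b a := fun a b => SimpleGraph.dist_comm
  rcases step hT huw.symm z with hcase | hcase
  · -- G.dist w z = G.dist u z + 1 : derive contradiction
    exfalso
    set k := G.dist u x with hk
    have hk1 : 1 ≤ k := by omega
    rcases step hT hadj u with h2 | h2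
    · -- dist x u = dist z u + 1, i.e. dist u z = k - 1
      have hzu : G.dist u z + 1 = k := by
        have := cc x u; have := cc z u; omega
      by_cases hk2 : k = 1
      · have h0 : G.dist u z = 0 := by omega
        exact hz ((hT.isConnected.dist_eq_zero_iff.mp h0).symm)
      · -- k ≥ 2
        have hwx : 0 < G.dist x w := by have := cc x w; omega
        obtain ⟨z', hxz', hz'⟩ := descend hT hwx
        -- dist z' w + 1 = dist x w = k - 1, so dist w z' = k - 2
        have hwz' : G.dist w z' + 2 = k := by
          have := cc w z'; have := cc x w; omega
        have hu_z' : G.dist u z' + 1 = k := by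
          have hle : G.dist u z' ≤ k - 1 := by
            have := hT.isConnected.dist_triangle (u := u) (v := w) (w := z')
            rw [adj_dist_one huw] at this
            omega
          have hge : k ≤ G.dist u z' + 1 := by
            have := hT.isConnected.dist_triangle (u := u) (v := z') (w := x)
            rw [adj_dist_one hxz'.symm] at this
            omega
          omega
        have hzz' : z = z' := by
          by_contra hne
          refine uniq hT (v := u) hadj hxz' hne ?_ ?_
          · have := cc z u; have := cc x u; omega
          · have := cc z' u; have := cc x u; omega
        rw [hzz'] at hcase
        omega
    · -- dist z u = dist x u + 1, i.e. dist u z = k + 1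
      have hz2 : G.dist u z = k + 1 := by
        have := cc z u; have := cc x u; omega
      have : G.dist w z ≤ k := by
        have := hT.isConnected.dist_triangle (u := w) (v := x) (w := z)
        rw [adj_dist_one hadj] at this
        omega
      omega
  · exact hcase


section Struct

variable [Fintype V]

/-- The subtree of `w` as a child of `u`. -/
noncomputable def sub (G : SimpleGraph V) (u w : V) : Finset V :=
  Finset.univ.filter (fun v => G.dist u v = G.dist w v + 1)

lemma mem_sub {G : SimpleGraph V} {u w v : V} :
    v ∈ sub G u w ↔ G.dist u v = G.dist w v + 1 := by
  simp [sub]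

lemma self_mem_sub (huw : G.Adj u w) : w ∈ sub G u w := by
  rw [mem_sub, SimpleGraph.dist_self, adj_dist_one huw]

lemma u_not_mem_sub (huw : G.Adj u w) : u ∉ sub G u w := by
  rw [mem_sub, SimpleGraph.dist_self]
  have : G.dist w u = 1 := adj_dist_one huw.symm
  omega

lemma sub_closure (hT : G.IsTree) (huw : G.Adj u w) {x z : V} (hx : x ∈ sub G u w)
    (hadj : G.Adj x z) (hz : z ≠ u) : z ∈ sub G u w := by
  rw [mem_sub] at hx ⊢
  exact closure hT huw hx hadj hz

lemma adj_mem_sub (hT : G.IsTree) (huw : G.Adj u w) {x : V} (hx : x ∈ sub G u w)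
    (hadj : G.Adj u x) : x = w := by
  rw [mem_sub, adj_dist_one hadj] at hx
  have : G.dist w x = 0 := by omega
  exact (hT.isConnected.dist_eq_zero_iff.mp this).symm

lemma sub_disj (hT : G.IsTree) (huw : G.Adj u w) (huw' : G.Adj u w') (hne : w ≠ w') :
    Disjoint (sub G u w) (sub G u w') := by
  rw [Finset.disjoint_left]
  intro v hv hv'
  rw [mem_sub] at hv hv'
  exact uniq hT (v := v) huw huw' hne (by omega) (by omega)

/-- Subtree at `u` with parent `p` (everything if `p = u`). -/
noncomputable def subT (G : SimpleGraph V) (p u : V) : Finset V :=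
  if p = u then Finset.univ else sub G p u

/-- children set -/
def Nbr (G : SimpleGraph V) [DecidableRel G.Adj] (p u : V) : Finset V :=
  G.neighborFinset u \ {p}

variable [DecidableRel G.Adj]

lemma mem_Nbr {p u w : V} : w ∈ Nbr G p u ↔ G.Adj u w ∧ w ≠ p := by
  simp [Nbr]

lemma card_Nbr_le_degree (p u : V) : (Nbr G p u).card ≤ G.degree u := by
  rw [← SimpleGraph.card_neighborFinset_eq_degree]
  exact Finset.card_le_card (Finset.sdiff_subset)

lemma u_mem_subT (hT : G.IsTree) (hpu : p = u ∨ G.Adj p u) : u ∈ subT G p u := by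
  rcases hpu with h | h
  · simp [subT, h]
  · have : p ≠ u := h.ne
    simp only [subT, if_neg this]
    rw [mem_sub, SimpleGraph.dist_self, adj_dist_one h]

lemma sub_subset_subT (hT : G.IsTree) (hpu : p = u ∨ G.Adj p u) (hw : w ∈ Nbr G p u) :
    sub G u w ⊆ subT G p u := by
  rw [mem_Nbr] at hw
  rcases hpu with h | h
  · simp [subT, h]
  · have hne : p ≠ u := h.ne
    simp only [subT, if_neg hne]
    intro v hv
    rw [mem_sub] at hv ⊢
    rcases step hT h v with hc | hc
    · exact hc
    · exact (uniq hT (v := v) h.symm hw.1 (Ne.symm hw.2) (by omega) (by omega)).elim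

lemma subT_cover (hT : G.IsTree) (hpu : p = u ∨ G.Adj p u) {v : V} (hv : v ∈ subT G p u)
    (hvu : v ≠ u) : ∃ w ∈ Nbr G p u, v ∈ sub G u w := by
  have hd : 0 < G.dist u v := hT.isConnected.pos_dist_of_ne (Ne.symm hvu)
  obtain ⟨w, hadj, hw⟩ := descend hT hd
  refine ⟨w, ?_, ?_⟩
  · rw [mem_Nbr]
    refine ⟨hadj, ?_⟩
    rcases hpu with h | h
    · rintro rfl; exact hadj.ne' h
    · rintro rfl
      simp only [subT, if_neg h.ne] at hv
      rw [mem_sub] at hv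
      omega
  · rw [mem_sub]; omega

lemma subT_eq (hT : G.IsTree) (hpu : p = u ∨ G.Adj p u) :
    subT G p u = insert u ((Nbr G p u).biUnion (fun w => sub G u w)) := by
  ext v
  constructor
  · intro hv
    by_cases hvu : v = u
    · simp [hvu]
    · obtain ⟨w, hw, hvw⟩ := subT_cover hT hpu hv hvu
      exact Finset.mem_insert_of_mem (Finset.mem_biUnion.mpr ⟨w, hw, hvw⟩)
  · intro hv
    rcases Finset.mem_insert.mp hv with rfl | hv
    · exact u_mem_subT hT hpu
    · obtain ⟨w, hw, hvw⟩ := Finset.mem_biUnion.mp hv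
      exact sub_subset_subT hT hpu hw hvw

end Struct


noncomputable def val' (b : Bool) : ℝ := if b then 1 else -1

section Ising

variable [Fintype V] [DecidableRel G.Adj]

lemma val'_not (b : Bool) : val' (!b) = - val' b := by cases b <;> simp [val']

lemma val'_true : val' true = 1 := rfl
lemma val'_false : val' false = -1 := rfl

/-- edges within `A` -/
def eIn (G : SimpleGraph V) [DecidableRel G.Adj] (A : Finset V) : Finset (V × V) :=
  Finset.univ.filter (fun p : V × V => p.1 < p.2 ∧ G.Adj p.1 p.2 ∧ p.1 ∈ A ∧ p.2 ∈ A)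

lemma mem_eIn {A : Finset V} {p : V × V} :
    p ∈ eIn G A ↔ p.1 < p.2 ∧ G.Adj p.1 p.2 ∧ p.1 ∈ A ∧ p.2 ∈ A := by
  simp [eIn]

noncomputable def wIn (G : SimpleGraph V) [DecidableRel G.Adj] (θ : V → V → ℝ)
    (A : Finset V) (σ : V → Bool) : ℝ :=
  ∏ p ∈ eIn G A, Real.exp (θ p.1 p.2 * val' (σ p.1) * val' (σ p.2))

lemma wIn_pos (θ : V → V → ℝ) (A : Finset V) (σ : V → Bool) : 0 < wIn G θ A σ :=
  Finset.prod_pos (fun p _ => Real.exp_pos _)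

noncomputable def ZA (G : SimpleGraph V) [DecidableRel G.Adj] (θ : V → V → ℝ)
    (L : Finset V) (y : V → Bool) (A : Finset V) (u : V) (ε : Bool) : ℝ :=
  ∑ σ : V → Bool,
    if (∀ v ∈ L, v ∈ A → σ v = y v) ∧ σ u = ε ∧ (∀ v, v ∉ A → σ v = true)
    then wIn G θ A σ else 0

lemma ZA_nonneg (θ : V → V → ℝ) (L : Finset V) (y : V → Bool) (A : Finset V) (u : V)
    (ε : Bool) : 0 ≤ ZA G θ L y A u ε := by
  refine Finset.sum_nonneg fun σ _ => ?_
  split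
  · exact (wIn_pos θ A σ).le
  · exact le_refl 0

lemma ZA_pos (θ : V → V → ℝ) (L : Finset V) (y : V → Bool) {A : Finset V} {u : V}
    {ε : Bool} (hu : u ∈ A) (hc : u ∈ L → y u = ε) : 0 < ZA G θ L y A u ε := by
  classical
  set σ₀ : V → Bool := fun v => if v ∈ A then (if v ∈ L then y v else if v = u then ε else true)
    else true with hσ₀
  have hcond : (∀ v ∈ L, v ∈ A → σ₀ v = y v) ∧ σ₀ u = ε ∧ (∀ v, v ∉ A → σ₀ v = true) := by
    refine ⟨fun v hvL hvA => by simp [hσ₀, hvA, hvL], ?_, fun v hv => by simp [hσ₀, hv]⟩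
    by_cases huL : u ∈ L
    · simp [hσ₀, hu, huL, hc huL]
    · simp [hσ₀, hu, huL]
  refine Finset.sum_pos' (fun σ _ => ?_) ⟨σ₀, Finset.mem_univ σ₀, ?_⟩
  · split
    · exact (wIn_pos θ A σ).le
    · exact le_refl 0
  · rw [if_pos hcond]; exact wIn_pos θ A σ₀

lemma ZA_zero (θ : V → V → ℝ) (L : Finset V) (y : V → Bool) {A : Finset V} {u : V}
    {ε : Bool} (hu : u ∈ A) (huL : u ∈ L) (hne : ε ≠ y u) : ZA G θ L y A u ε = 0 := by
  refine Finset.sum_eq_zero fun σ _ => ?_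
  rw [if_neg]
  rintro ⟨h1, h2, -⟩
  exact hne (h2 ▸ h1 u huL hu)

lemma ZA_flip (θ : V → V → ℝ) (L : Finset V) (y : V → Bool) {A : Finset V} {u : V}
    (hu : u ∈ A) (hLA : ∀ v ∈ L, v ∉ A) (ε : Bool) :
    ZA G θ L y A u ε = ZA G θ L y A u (!ε) := by
  classical
  set fl : (V → Bool) → (V → Bool) := fun σ => fun v => if v ∈ A then !(σ v) else σ v with hfl
  have hinv : Function.Involutive fl := by
    intro σ; funext v; by_cases hv : v ∈ A <;> simp [hfl, hv]
  have key : ∑ σ : V → Bool,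
      (if (∀ v ∈ L, v ∈ A → (fl σ) v = y v) ∧ (fl σ) u = !ε ∧ (∀ v, v ∉ A → (fl σ) v = true)
        then wIn G θ A (fl σ) else 0)
      = ∑ σ : V → Bool,
      (if (∀ v ∈ L, v ∈ A → σ v = y v) ∧ σ u = !ε ∧ (∀ v, v ∉ A → σ v = true)
        then wIn G θ A σ else 0) := by
    exact Fintype.sum_equiv hinv.toPerm _ _ (fun σ => rfl)
  unfold ZA
  rw [← key]
  refine Finset.sum_congr rfl fun σ _ => ?_
  have hcond : ((∀ v ∈ L, v ∈ A → σ v = y v) ∧ σ u = ε ∧ (∀ v, v ∉ A → σ v = true)) ↔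
      ((∀ v ∈ L, v ∈ A → (fl σ) v = y v) ∧ (fl σ) u = !ε ∧
        (∀ v, v ∉ A → (fl σ) v = true)) := by
    constructor
    · rintro ⟨h1, h2, h3⟩
      refine ⟨fun v hvL hvA => absurd hvA (hLA v hvL), ?_, fun v hv => by
        simp [hfl, hv, h3 v hv]⟩
      simp [hfl, hu, h2]
    · rintro ⟨h1, h2, h3⟩
      refine ⟨fun v hvL hvA => absurd hvA (hLA v hvL), ?_, fun v hv => by
        have := h3 v hv; simpa [hfl, hv] using this⟩
      simp only [hfl, if_pos hu] at h2
      cases hσu : σ u <;> cases ε <;> simp [hσu] at h2 ⊢ <;> simp [h2]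
  have hw : wIn G θ A σ = wIn G θ A (fl σ) := by
    unfold wIn
    refine Finset.prod_congr rfl fun p hp => ?_
    rw [mem_eIn] at hp
    have e1 : (fl σ) p.1 = !(σ p.1) := by simp [hfl, hp.2.2.1]
    have e2 : (fl σ) p.2 = !(σ p.2) := by simp [hfl, hp.2.2.2]
    rw [e1, e2, val'_not, val'_not]
    congr 1
    ring
  by_cases h : (∀ v ∈ L, v ∈ A → σ v = y v) ∧ σ u = ε ∧ (∀ v, v ∉ A → σ v = true)
  · rw [if_pos h, if_pos (hcond.mp h), ← hw]
  · rw [if_neg h, if_neg (fun hx => h (hcond.mpr hx))]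

end Ising


section Split

variable [Fintype V]

lemma sum_split (B C : Finset V) (hd : Disjoint B C) (F G : (V → Bool) → ℝ)
    (hF : ∀ σ τ : V → Bool, (∀ v ∈ B, σ v = τ v) → F σ = F τ)
    (hG : ∀ σ τ : V → Bool, (∀ v ∈ C, σ v = τ v) → G σ = G τ) :
    (∑ σ : V → Bool, if (∀ v, v ∉ B ∪ C → σ v = true) then F σ * G σ else 0)
      = (∑ σ : V → Bool, if (∀ v, v ∉ B → σ v = true) then F σ else 0) *
        (∑ σ : V → Bool, if (∀ v, v ∉ C → σ v = true) then G σ else 0) := by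
  classical
  rw [← Finset.sum_filter, ← Finset.sum_filter, ← Finset.sum_filter]
  rw [Finset.sum_mul_sum]
  rw [← Finset.sum_product']
  refine Finset.sum_nbij' (fun σ => ((fun v => if v ∈ B then σ v else true),
      (fun v => if v ∈ C then σ v else true))) (fun q => (fun v => if v ∈ B then q.1 v
      else if v ∈ C then q.2 v else true)) ?_ ?_ ?_ ?_ ?_
  · intro σ hσ
    rw [Finset.mem_filter] at hσ
    rw [Finset.mem_product]
    constructor <;> rw [Finset.mem_filter] <;>
      exact ⟨Finset.mem_univ _, fun v hv => by simp [hv]⟩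
  · intro q hq
    rw [Finset.mem_product] at hq
    rw [Finset.mem_filter]
    refine ⟨Finset.mem_univ _, fun v hv => ?_⟩
    rw [Finset.mem_union] at hv
    push_neg at hv
    simp [hv.1, hv.2]
  · intro σ hσ
    rw [Finset.mem_filter] at hσ
    funext v
    by_cases hvB : v ∈ B
    · simp [hvB]
    · by_cases hvC : v ∈ C
      · simp [hvB, hvC]
      · have : v ∉ B ∪ C := by rw [Finset.mem_union]; tauto
        simp [hvB, hvC, hσ.2 v this]
  · intro q hq
    rw [Finset.mem_product, Finset.mem_filter, Finset.mem_filter] at hq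
    have hq1 := hq.1.2
    have hq2 := hq.2.2
    ext v
    · by_cases hvB : v ∈ B
      · simp [hvB]
      · simp [hvB, hq1 v hvB]
    · by_cases hvC : v ∈ C
      · have hvB : v ∉ B := fun h => (Finset.disjoint_left.mp hd h) hvC
        simp [hvB, hvC]
      · simp [hvC, hq2 v hvC]
  · intro σ hσ
    have h1 : F σ = F (fun v => if v ∈ B then σ v else true) :=
      hF _ _ (fun v hv => by simp [hv])
    have h2 : G σ = G (fun v => if v ∈ C then σ v else true) :=
      hG _ _ (fun v hv => by simp [hv])
    rw [← h1, ← h2]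

end Split


section Fact

variable [Fintype V] [DecidableRel G.Adj]

noncomputable def tE (θ : V → V → ℝ) (u w : V) : ℝ := θ (min u w) (max u w)

lemma eIn_mono {A A' : Finset V} (h : A ⊆ A') : eIn G A ⊆ eIn G A' := by
  intro p hp
  rw [mem_eIn] at hp ⊢
  exact ⟨hp.1, hp.2.1, h hp.2.2.1, h hp.2.2.2⟩

lemma eIn_singleton (u : V) : eIn G {u} = ∅ := by
  ext p
  simp only [mem_eIn, Finset.notMem_empty, iff_false]
  rintro ⟨h1, -, h3, h4⟩
  rw [Finset.mem_singleton] at h3 h4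
  rw [h3, h4] at h1
  exact lt_irrefl _ h1

lemma ZA_singleton (θ : V → V → ℝ) (L : Finset V) (y : V → Bool) {u : V} (huL : u ∉ L)
    (ε : Bool) : ZA G θ L y {u} u ε = 1 := by
  classical
  unfold ZA
  rw [Finset.sum_eq_single_of_mem (fun v => if v = u then ε else true) (Finset.mem_univ _)]
  · rw [if_pos, wIn]
    · rw [eIn_singleton, Finset.prod_empty]
    · refine ⟨fun v hvL hvA => ?_, by simp, fun v hv => ?_⟩
      · rw [Finset.mem_singleton] at hvA
        exact absurd (hvA ▸ hvL) huL
      · rw [Finset.mem_singleton] at hv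
        simp [hv]
  · intro σ _ hne
    rw [if_neg]
    rintro ⟨-, h2, h3⟩
    apply hne
    funext v
    by_cases hv : v = u
    · simp [hv, h2]
    · have : v ∉ ({u} : Finset V) := by simp [hv]
      simp [hv, h3 v this]

variable {θ : V → V → ℝ} {L : Finset V} {y : V → Bool}

lemma disj_Bp_C (hT : G.IsTree) {u w : V} (huw : G.Adj u w) {S : Finset V}
    (hS : ∀ x ∈ S, G.Adj u x) (hwS : w ∉ S) :
    Disjoint (insert u (S.biUnion (fun x => sub G u x))) (sub G u w) := by
  rw [Finset.disjoint_left]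
  intro a ha haC
  rcases Finset.mem_insert.mp ha with rfl | ha
  · exact u_not_mem_sub huw haC
  · obtain ⟨x, hx, hax⟩ := Finset.mem_biUnion.mp ha
    have hxw : x ≠ w := fun h => hwS (h ▸ hx)
    exact Finset.disjoint_left.mp (sub_disj hT (hS x hx) huw hxw) hax haC

lemma eIn_decomp (hT : G.IsTree) {u w : V} (huw : G.Adj u w) {S : Finset V}
    (hS : ∀ x ∈ S, G.Adj u x) (hwS : w ∉ S) :
    eIn G (insert u (S.biUnion (fun x => sub G u x)) ∪ sub G u w)
      = (eIn G (insert u (S.biUnion (fun x => sub G u x))) ∪ eIn G (sub G u w))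
        ∪ {(min u w, max u w)} := by
  set B' := insert u (S.biUnion (fun x => sub G u x)) with hB'
  have hBC := disj_Bp_C hT huw hS hwS
  ext p
  constructor
  · intro hp
    rw [mem_eIn] at hp
    obtain ⟨hlt, hadj, hp1, hp2⟩ := hp
    rw [Finset.mem_union] at hp1 hp2
    rcases hp1 with hp1 | hp1 <;> rcases hp2 with hp2 | hp2
    · exact Finset.mem_union_left _ (Finset.mem_union_left _ (mem_eIn.mpr ⟨hlt, hadj, hp1, hp2⟩))
    · -- p1 ∈ B', p2 ∈ C
      by_cases hu1 : p.1 = u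
      · have : p.2 = w := adj_mem_sub hT huw hp2 (hu1 ▸ hadj)
        apply Finset.mem_union_right
        rw [Finset.mem_singleton]
        have huw' : u < w := by rw [← hu1, ← this]; exact hlt
        rw [min_eq_left huw'.le, max_eq_right huw'.le]
        exact Prod.ext hu1 this
      · exfalso
        rcases Finset.mem_insert.mp hp1 with h | h
        · exact hu1 h
        · obtain ⟨x, hx, hpx⟩ := Finset.mem_biUnion.mp h
          have hp2' : p.2 ∈ sub G u x := sub_closure hT (hS x hx) hpx hadj
            (fun hh => u_not_mem_sub huw (hh ▸ hp2))
          have hxw : x ≠ w := fun h => hwS (h ▸ hx)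
          exact Finset.disjoint_left.mp (sub_disj hT (hS x hx) huw hxw) hp2' hp2
    · -- p1 ∈ C, p2 ∈ B'
      by_cases hu2 : p.2 = u
      · have : p.1 = w := adj_mem_sub hT huw hp1 (hu2 ▸ hadj.symm)
        apply Finset.mem_union_right
        rw [Finset.mem_singleton]
        have hwu : w < u := by rw [← hu2, ← this]; exact hlt
        rw [min_eq_right hwu.le, max_eq_left hwu.le]
        exact Prod.ext this hu2
      · exfalso
        rcases Finset.mem_insert.mp hp2 with h | h
        · exact hu2 h
        · obtain ⟨x, hx, hpx⟩ := Finset.mem_biUnion.mp h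
          have hp1' : p.1 ∈ sub G u x := sub_closure hT (hS x hx) hpx hadj.symm
            (fun hh => u_not_mem_sub huw (hh ▸ hp1))
          have hxw : x ≠ w := fun h => hwS (h ▸ hx)
          exact Finset.disjoint_left.mp (sub_disj hT (hS x hx) huw hxw) hp1' hp1
    · exact Finset.mem_union_left _ (Finset.mem_union_right _ (mem_eIn.mpr ⟨hlt, hadj, hp1, hp2⟩))
  · intro hp
    rcases Finset.mem_union.mp hp with hp | hp
    · rcases Finset.mem_union.mp hp with hp | hp
      · exact eIn_mono Finset.subset_union_left hp
      · exact eIn_mono Finset.subset_union_right hp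
    · rw [Finset.mem_singleton] at hp
      rw [hp, mem_eIn]
      have hne := huw.ne
      refine ⟨min_lt_max.mpr hne, ?_, ?_, ?_⟩
      · rcases lt_or_gt_of_ne hne with h | h
        · rw [min_eq_left h.le, max_eq_right h.le]; exact huw
        · rw [min_eq_right h.le, max_eq_left h.le]; exact huw.symm
      · rcases lt_or_gt_of_ne hne with h | h
        · rw [min_eq_left h.le]
          exact Finset.mem_union_left _ (Finset.mem_insert_self u _)
        · rw [min_eq_right h.le]
          exact Finset.mem_union_right _ (self_mem_sub huw)
      · rcases lt_or_gt_of_ne hne with h | h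
        · rw [max_eq_right h.le]
          exact Finset.mem_union_right _ (self_mem_sub huw)
        · rw [max_eq_left h.le]
          exact Finset.mem_union_left _ (Finset.mem_insert_self u _)

lemma w_not_mem_Bp (hT : G.IsTree) {u w : V} (huw : G.Adj u w) {S : Finset V}
    (hS : ∀ x ∈ S, G.Adj u x) (hwS : w ∉ S) :
    w ∉ insert u (S.biUnion (fun x => sub G u x)) :=
  fun h => Finset.disjoint_left.mp (disj_Bp_C hT huw hS hwS) h (self_mem_sub huw)

end Fact


section FactStep

variable [Fintype V] [DecidableRel G.Adj] {θ : V → V → ℝ} {L : Finset V} {y : V → Bool}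

lemma if_merge (P Q R : Prop) [Decidable P] [Decidable Q] [Decidable R] (x : ℝ) :
    (if R then (if P ∧ Q then x else 0) else 0) = if P ∧ Q ∧ R then x else 0 := by
  split_ifs <;> first | rfl | tauto

lemma fact_step (hT : G.IsTree) {u w : V} (huL : u ∉ L) (huw : G.Adj u w) {S : Finset V}
    (hS : ∀ x ∈ S, G.Adj u x) (hwS : w ∉ S) (ε : Bool) :
    ZA G θ L y (insert u (S.biUnion (fun x => sub G u x)) ∪ sub G u w) u ε
      = ZA G θ L y (insert u (S.biUnion (fun x => sub G u x))) u ε *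
        (∑ b : Bool, Real.exp (tE θ u w * val' ε * val' b) * ZA G θ L y (sub G u w) w b) := by
  classical
  set B' := insert u (S.biUnion (fun x => sub G u x)) with hB'def
  set C := sub G u w with hCdef
  have hBC : Disjoint B' C := disj_Bp_C hT huw hS hwS
  have huB' : u ∈ B' := Finset.mem_insert_self u _
  have hwC : w ∈ C := self_mem_sub huw
  have hd1 : Disjoint (eIn G B') (eIn G C) := by
    rw [Finset.disjoint_left]
    intro p hp hp'
    rw [mem_eIn] at hp hp'
    exact Finset.disjoint_left.mp hBC hp.2.2.1 hp'.2.2.1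
  have hd2 : Disjoint (eIn G B' ∪ eIn G C) {(min u w, max u w)} := by
    rw [Finset.disjoint_right]
    intro p hp hp'
    rw [Finset.mem_singleton] at hp
    subst hp
    rcases Finset.mem_union.mp hp' with h | h <;> rw [mem_eIn] at h
    · rcases lt_or_gt_of_ne huw.ne with hlt | hlt
      · rw [max_eq_right hlt.le] at h
        exact w_not_mem_Bp hT huw hS hwS h.2.2.2
      · rw [min_eq_right hlt.le] at h
        exact w_not_mem_Bp hT huw hS hwS h.2.2.1
    · rcases lt_or_gt_of_ne huw.ne with hlt | hlt
      · rw [min_eq_left hlt.le] at h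
        exact u_not_mem_sub huw h.2.2.1
      · rw [max_eq_left hlt.le] at h
        exact u_not_mem_sub huw h.2.2.2
  have hw_dec : ∀ σ : V → Bool, wIn G θ (B' ∪ C) σ
      = wIn G θ B' σ * wIn G θ C σ * Real.exp (tE θ u w * val' (σ u) * val' (σ w)) := by
    intro σ
    unfold wIn
    rw [eIn_decomp hT huw hS hwS, Finset.prod_union hd2, Finset.prod_union hd1,
      Finset.prod_singleton]
    congr 1
    unfold tE
    rcases lt_or_gt_of_ne huw.ne with h | h
    · rw [min_eq_left h.le, max_eq_right h.le]
    · rw [min_eq_right h.le, max_eq_left h.le]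
      congr 1
      ring
  set F : (V → Bool) → ℝ := fun σ =>
    if (∀ v ∈ L, v ∈ B' → σ v = y v) ∧ σ u = ε then wIn G θ B' σ else 0 with hFdef
  set Gf : (V → Bool) → ℝ := fun σ =>
    if (∀ v ∈ L, v ∈ C → σ v = y v)
    then Real.exp (tE θ u w * val' ε * val' (σ w)) * wIn G θ C σ else 0 with hGdef
  have step1 : ZA G θ L y (B' ∪ C) u ε
      = ∑ σ : V → Bool, if (∀ v, v ∉ B' ∪ C → σ v = true) then F σ * Gf σ else 0 := by
    unfold ZA
    refine Finset.sum_congr rfl fun σ _ => ?_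
    by_cases hout : ∀ v, v ∉ B' ∪ C → σ v = true
    · rw [if_pos hout]
      by_cases h1 : ∀ v ∈ L, v ∈ B' → σ v = y v
      · by_cases h2 : ∀ v ∈ L, v ∈ C → σ v = y v
        · by_cases h3 : σ u = ε
          · have hl : ∀ v ∈ L, v ∈ B' ∪ C → σ v = y v := by
              intro v hvL hvA
              rcases Finset.mem_union.mp hvA with h | h
              · exact h1 v hvL h
              · exact h2 v hvL h
            rw [if_pos ⟨hl, h3, hout⟩, hFdef, hGdef]
            simp only []
            rw [if_pos ⟨h1, h3⟩, if_pos h2, hw_dec σ, h3]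
            ring
          · rw [if_neg (fun hc => h3 hc.2.1), hFdef]
            simp only []
            rw [if_neg (fun hc => h3 hc.2), zero_mul]
        · rw [if_neg (fun hc => h2 (fun v hv hvc => hc.1 v hv (Finset.mem_union_right _ hvc))),
            hGdef]
          simp only []
          rw [if_neg h2, mul_zero]
      · rw [if_neg (fun hc => h1 (fun v hv hvb => hc.1 v hv (Finset.mem_union_left _ hvb))),
          hFdef]
        simp only []
        rw [if_neg (fun hc => h1 hc.1), zero_mul]
    · rw [if_neg hout, if_neg (fun hc => hout hc.2.2)]
  have hF : ∀ σ τ : V → Bool, (∀ v ∈ B', σ v = τ v) → F σ = F τ := by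
    intro σ τ hagree
    rw [hFdef]
    simp only []
    have hiff : ((∀ v ∈ L, v ∈ B' → σ v = y v) ∧ σ u = ε)
        ↔ ((∀ v ∈ L, v ∈ B' → τ v = y v) ∧ τ u = ε) := by
      constructor
      · rintro ⟨ha, hb⟩
        exact ⟨fun v hv hv' => (hagree v hv') ▸ ha v hv hv', (hagree u huB') ▸ hb⟩
      · rintro ⟨ha, hb⟩
        exact ⟨fun v hv hv' => (hagree v hv').symm ▸ ha v hv hv',
          (hagree u huB').symm ▸ hb⟩
    have hwe : wIn G θ B' σ = wIn G θ B' τ := by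
      unfold wIn
      refine Finset.prod_congr rfl fun p hp => ?_
      rw [mem_eIn] at hp
      rw [hagree p.1 hp.2.2.1, hagree p.2 hp.2.2.2]
    by_cases h : (∀ v ∈ L, v ∈ B' → σ v = y v) ∧ σ u = ε
    · rw [if_pos h, if_pos (hiff.mp h), hwe]
    · rw [if_neg h, if_neg (fun hx => h (hiff.mpr hx))]
  have hGf : ∀ σ τ : V → Bool, (∀ v ∈ C, σ v = τ v) → Gf σ = Gf τ := by
    intro σ τ hagree
    rw [hGdef]
    simp only []
    have hiff : (∀ v ∈ L, v ∈ C → σ v = y v) ↔ (∀ v ∈ L, v ∈ C → τ v = y v) := by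
      constructor
      · intro ha v hv hv'
        exact (hagree v hv') ▸ ha v hv hv'
      · intro ha v hv hv'
        exact (hagree v hv').symm ▸ ha v hv hv'
    have hwe : wIn G θ C σ = wIn G θ C τ := by
      unfold wIn
      refine Finset.prod_congr rfl fun p hp => ?_
      rw [mem_eIn] at hp
      rw [hagree p.1 hp.2.2.1, hagree p.2 hp.2.2.2]
    by_cases h : ∀ v ∈ L, v ∈ C → σ v = y v
    · rw [if_pos h, if_pos (hiff.mp h), hwe, hagree w hwC]
    · rw [if_neg h, if_neg (fun hx => h (hiff.mpr hx))]
  rw [step1, sum_split B' C hBC F Gf hF hGf]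
  congr 1
  · -- first factor equals ZA B' u ε
    unfold ZA
    refine Finset.sum_congr rfl fun σ _ => ?_
    rw [hFdef]
    simp only []
    rw [if_merge]
  · -- second factor
    have hsw : ∀ σ : V → Bool, (if (∀ v, v ∉ C → σ v = true) then Gf σ else 0)
        = ∑ b : Bool, (if σ w = b then (if (∀ v, v ∉ C → σ v = true) then Gf σ else 0) else 0) := by
      intro σ
      rw [Finset.sum_ite_eq]
      simp
    rw [Finset.sum_congr rfl (fun σ _ => hsw σ), Finset.sum_comm]
    refine Finset.sum_congr rfl fun b _ => ?_
    have hpt : ∀ σ : V → Bool,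
        (if σ w = b then (if (∀ v, v ∉ C → σ v = true) then Gf σ else 0) else 0)
        = Real.exp (tE θ u w * val' ε * val' b) *
          (if (∀ v ∈ L, v ∈ C → σ v = y v) ∧ σ w = b ∧ (∀ v, v ∉ C → σ v = true)
            then wIn G θ C σ else 0) := by
      intro σ
      by_cases hb : σ w = b
      · by_cases hout : ∀ v, v ∉ C → σ v = true
        · by_cases hl : ∀ v ∈ L, v ∈ C → σ v = y v
          · rw [if_pos hb, if_pos hout, hGdef]
            simp only []
            rw [if_pos hl, if_pos ⟨hl, hb, hout⟩, hb]
          · rw [if_pos hb, if_pos hout, hGdef]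
            simp only []
            rw [if_neg hl, if_neg (fun hc => hl hc.1), mul_zero]
        · rw [if_pos hb, if_neg hout, if_neg (fun hc => hout hc.2.2), mul_zero]
      · rw [if_neg hb, if_neg (fun hc => hb hc.2.1), mul_zero]
    rw [Finset.sum_congr rfl (fun σ _ => hpt σ), ← Finset.mul_sum]
    rfl

end FactStep


section FactAll

variable [Fintype V] [DecidableRel G.Adj] {θ : V → V → ℝ} {L : Finset V} {y : V → Bool}

lemma fact (hT : G.IsTree) {u : V} (huL : u ∉ L) (S : Finset V)
    (hS : ∀ x ∈ S, G.Adj u x) (ε : Bool) :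
    ZA G θ L y (insert u (S.biUnion (fun x => sub G u x))) u ε
      = ∏ w ∈ S, (∑ b : Bool, Real.exp (tE θ u w * val' ε * val' b) *
          ZA G θ L y (sub G u w) w b) := by
  classical
  induction S using Finset.induction_on with
  | empty =>
    rw [Finset.biUnion_empty, Finset.prod_empty]
    exact ZA_singleton θ L y huL ε
  | insert w S hw ih =>
    have hSw : ∀ x ∈ S, G.Adj u x := fun x hx => hS x (Finset.mem_insert_of_mem hx)
    have huw : G.Adj u w := hS w (Finset.mem_insert_self w S)
    have hset : insert u ((insert w S).biUnion (fun x => sub G u x))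
        = insert u (S.biUnion (fun x => sub G u x)) ∪ sub G u w := by
      rw [Finset.biUnion_insert]
      ext a
      simp only [Finset.mem_insert, Finset.mem_union, Finset.mem_biUnion]
      constructor
      · rintro (rfl | (h | ⟨x, hx, hax⟩))
        · exact Or.inl (Or.inl rfl)
        · exact Or.inr h
        · exact Or.inl (Or.inr ⟨x, hx, hax⟩)
      · rintro ((rfl | ⟨x, hx, hax⟩) | h)
        · exact Or.inl rfl
        · exact Or.inr (Or.inr ⟨x, hx, hax⟩)
        · exact Or.inr (Or.inl h)
    rw [hset, fact_step hT huL huw hSw hw ε, ih hSw, Finset.prod_insert hw, mul_comm]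

end FactAll


section Analysis

open Real

lemma exp_core {t : ℝ} (h0 : 0 ≤ t) (h1 : t ≤ 1/2) :
    Real.exp (2*t) - 1 ≤ t * (Real.exp (2*t) + 1) := by
  have hx : |2*t| ≤ 1 := by rw [abs_of_nonneg (by linarith)]; linarith
  have hb := Real.exp_bound hx (n := 4) (by norm_num)
  have hsum : ∑ i ∈ Finset.range 4, (2*t)^i / (Nat.factorial i)
      = 1 + 2*t + 2*t^2 + (4/3)*t^3 := by
    simp [Finset.sum_range_succ, Nat.factorial]
    ring
  rw [hsum] at hb
  have hb' : Real.exp (2*t) ≤ 1 + 2*t + 2*t^2 + (4/3)*t^3 + (5/6)*t^4 := by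
    have h2 := (abs_le.mp hb).2
    rw [abs_of_nonneg (by linarith : (0:ℝ) ≤ 2*t)] at h2
    norm_num [Nat.factorial] at h2
    nlinarith [h2]
  nlinarith [hb', sq_nonneg t, pow_nonneg h0 3, pow_nonneg h0 4, pow_nonneg h0 5,
    mul_nonneg (mul_nonneg h0 h0) h0]

lemma exp_core' {t : ℝ} (ht : |t| ≤ 1/2) :
    |Real.exp (2*t) - Real.exp (-(2*t))| ≤ |t| * (2 + Real.exp (2*t) + Real.exp (-(2*t))) := by
  have key : ∀ s : ℝ, 0 ≤ s → s ≤ 1/2 →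
      Real.exp (2*s) - Real.exp (-(2*s)) ≤ s * (2 + Real.exp (2*s) + Real.exp (-(2*s))) := by
    intro s hs0 hs1
    have hc := exp_core hs0 hs1
    have hE : Real.exp (-(2*s)) = (Real.exp (2*s))⁻¹ := by
      rw [← Real.exp_neg]
    have hEpos : 0 < Real.exp (2*s) := Real.exp_pos _
    rw [hE]
    have hinv : Real.exp (2*s) * (Real.exp (2*s))⁻¹ = 1 := mul_inv_cancel₀ hEpos.ne'
    have hinvpos : 0 < (Real.exp (2*s))⁻¹ := inv_pos.mpr hEpos
    have hmul := mul_le_mul_of_nonneg_right hc (by positivity : (0:ℝ) ≤ Real.exp (2*s) + 1)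
    nlinarith [hmul, hinv, hinvpos, hEpos]
  rcases le_or_gt 0 t with h | h
  · have := key t h (by rwa [abs_of_nonneg h] at ht)
    rw [abs_of_nonneg h]
    rw [abs_of_nonneg (by nlinarith [Real.exp_le_exp.mpr (by linarith : -(2*t) ≤ 2*t)] : 
      (0:ℝ) ≤ Real.exp (2*t) - Real.exp (-(2*t)))]
    exact this
  · have hmt : 0 ≤ -t := by linarith
    have := key (-t) hmt (by rwa [abs_of_neg h] at ht)
    rw [abs_of_neg h]
    have hswap : Real.exp (2*t) - Real.exp (-(2*t))
        = -(Real.exp (2*(-t)) - Real.exp (-(2*(-t)))) := by ring_nf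
    rw [hswap, abs_neg]
    rw [abs_of_nonneg (by nlinarith [Real.exp_le_exp.mpr (by linarith : -(2*(-t)) ≤ 2*(-t))] :
      (0:ℝ) ≤ Real.exp (2*(-t)) - Real.exp (-(2*(-t))))]
    have h2 : 2*(-t) = -(2*t) := by ring
    calc Real.exp (2*(-t)) - Real.exp (-(2*(-t)))
        ≤ (-t) * (2 + Real.exp (2*(-t)) + Real.exp (-(2*(-t)))) := this
      _ = (-t) * (2 + Real.exp (2*t) + Real.exp (-(2*t))) := by rw [h2, neg_neg]; ring_nf
  
end Analysis


section LogRatio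

open Real

lemma cosh_ge_two (l : ℝ) : 2 ≤ Real.exp l + Real.exp (-l) := by
  have h1 : Real.exp (l/2) * Real.exp (-(l/2)) = 1 := by
    rw [← Real.exp_add]; norm_num
  have h2 : Real.exp (l/2) * Real.exp (l/2) = Real.exp l := by
    rw [← Real.exp_add]; ring_nf
  have h3 : Real.exp (-(l/2)) * Real.exp (-(l/2)) = Real.exp (-l) := by
    rw [← Real.exp_add]; ring_nf
  nlinarith [sq_nonneg (Real.exp (l/2) - Real.exp (-(l/2))), h1, h2, h3]

lemma logratio_bound {t : ℝ} (ht : |t| ≤ 1/2) {Zp Zm : ℝ} (hp : 0 < Zp) (hm : 0 < Zm) :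
    |Real.log ((Real.exp t * Zp + Real.exp (-t) * Zm) / (Real.exp (-t) * Zp + Real.exp t * Zm))|
      ≤ |t| * |Real.log (Zp / Zm)| := by
  set g : ℝ → ℝ := fun l =>
    Real.log (Real.exp (t + l) + Real.exp (-t)) - Real.log (Real.exp (l - t) + Real.exp t)
    with hgdef
  have hpos1 : ∀ l : ℝ, 0 < Real.exp (t + l) + Real.exp (-t) := fun l => by positivity
  have hpos2 : ∀ l : ℝ, 0 < Real.exp (l - t) + Real.exp t := fun l => by positivity
  have hderiv : ∀ l : ℝ, HasDerivAt g
      (Real.exp (t + l) / (Real.exp (t + l) + Real.exp (-t))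
        - Real.exp (l - t) / (Real.exp (l - t) + Real.exp t)) l := by
    intro l
    have h1 : HasDerivAt (fun l : ℝ => t + l) 1 l := by
      simpa using (hasDerivAt_id l).const_add t
    have h2 : HasDerivAt (fun l : ℝ => Real.exp (t + l)) (Real.exp (t + l)) l := by
      simpa using h1.exp
    have h3 : HasDerivAt (fun l : ℝ => Real.exp (t + l) + Real.exp (-t))
        (Real.exp (t + l)) l := by
      simpa using h2.add_const (Real.exp (-t))
    have h4 : HasDerivAt (fun l : ℝ => Real.log (Real.exp (t + l) + Real.exp (-t)))
        (Real.exp (t + l) / (Real.exp (t + l) + Real.exp (-t))) l := by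
      simpa using h3.log (hpos1 l).ne'
    have h5 : HasDerivAt (fun l : ℝ => l - t) 1 l := by
      simpa using (hasDerivAt_id l).sub_const t
    have h6 : HasDerivAt (fun l : ℝ => Real.exp (l - t)) (Real.exp (l - t)) l := by
      simpa using h5.exp
    have h7 : HasDerivAt (fun l : ℝ => Real.exp (l - t) + Real.exp t) (Real.exp (l - t)) l := by
      simpa using h6.add_const (Real.exp t)
    have h8 : HasDerivAt (fun l : ℝ => Real.log (Real.exp (l - t) + Real.exp t))
        (Real.exp (l - t) / (Real.exp (l - t) + Real.exp t)) l := by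
      simpa using h7.log (hpos2 l).ne'
    exact h4.sub h8
  have hbound : ∀ l : ℝ,
      ‖Real.exp (t + l) / (Real.exp (t + l) + Real.exp (-t))
        - Real.exp (l - t) / (Real.exp (l - t) + Real.exp t)‖ ≤ |t| := by
    intro l
    have hA := hpos1 l
    have hB := hpos2 l
    have hform : Real.exp (t + l) / (Real.exp (t + l) + Real.exp (-t))
        - Real.exp (l - t) / (Real.exp (l - t) + Real.exp t)
        = (Real.exp (2*t) - Real.exp (-(2*t)))
          / (Real.exp l + Real.exp (-l) + Real.exp (2*t) + Real.exp (-(2*t))) := by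
      simp only [two_mul, Real.exp_add, Real.exp_sub, Real.exp_neg, neg_add]
      field_simp
      ring
    rw [hform, Real.norm_eq_abs, abs_div]
    have hden : 0 < Real.exp l + Real.exp (-l) + Real.exp (2*t) + Real.exp (-(2*t)) := by
      positivity
    rw [abs_of_pos hden, div_le_iff₀ hden]
    calc |Real.exp (2*t) - Real.exp (-(2*t))|
        ≤ |t| * (2 + Real.exp (2*t) + Real.exp (-(2*t))) := exp_core' ht
      _ ≤ |t| * (Real.exp l + Real.exp (-l) + Real.exp (2*t) + Real.exp (-(2*t))) := by
          have := cosh_ge_two l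
          have : (2:ℝ) + Real.exp (2*t) + Real.exp (-(2*t))
              ≤ Real.exp l + Real.exp (-l) + Real.exp (2*t) + Real.exp (-(2*t)) := by linarith
          exact mul_le_mul_of_nonneg_left this (abs_nonneg t)
  set lam := Real.log (Zp / Zm) with hlam
  have hmvt := Convex.norm_image_sub_le_of_norm_hasDerivWithin_le
    (f := g) (C := |t|) (s := Set.univ)
    (fun x _ => (hderiv x).hasDerivWithinAt) (fun x _ => hbound x) convex_univ
    (Set.mem_univ 0) (Set.mem_univ lam)
  have hg0 : g 0 = 0 := by
    rw [hgdef]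
    simp only []
    rw [add_zero, zero_sub, add_comm (Real.exp (-t)) (Real.exp t), sub_self]
  have hexplam : Real.exp lam = Zp / Zm := Real.exp_log (by positivity)
  have hgl : g lam = Real.log ((Real.exp t * Zp + Real.exp (-t) * Zm)
      / (Real.exp (-t) * Zp + Real.exp t * Zm)) := by
    rw [hgdef]
    simp only []
    have he : Real.exp (-t) = (Real.exp t)⁻¹ := Real.exp_neg t
    have hnum : Real.exp t * Zp + Real.exp (-t) * Zm
        = Zm * (Real.exp (t + lam) + Real.exp (-t)) := by
      rw [Real.exp_add, hexplam, he]
      field_simp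
    have hden : Real.exp (-t) * Zp + Real.exp t * Zm
        = Zm * (Real.exp (lam - t) + Real.exp t) := by
      rw [Real.exp_sub, hexplam, he]
      field_simp
    rw [hnum, hden, Real.log_div (by positivity) (by positivity),
      Real.log_mul hm.ne' (hpos1 lam).ne', Real.log_mul hm.ne' (hpos2 lam).ne']
    ring
  rw [Real.norm_eq_abs, hg0, sub_zero, hgl, Real.norm_eq_abs, sub_zero] at hmvt
  exact hmvt

lemma logratio_crude (t : ℝ) {Zp Zm : ℝ} (hp : 0 ≤ Zp) (hm : 0 ≤ Zm) (hsum : 0 < Zp + Zm) :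
    |Real.log ((Real.exp t * Zp + Real.exp (-t) * Zm)
      / (Real.exp (-t) * Zp + Real.exp t * Zm))| ≤ 2 * |t| := by
  have c1 : Real.exp (-|t|) ≤ Real.exp t := Real.exp_le_exp.mpr (neg_abs_le t)
  have c2 : Real.exp (-|t|) ≤ Real.exp (-t) := Real.exp_le_exp.mpr (by
    have := le_abs_self t; linarith)
  have hN : 0 < Real.exp t * Zp + Real.exp (-t) * Zm := by
    nlinarith [mul_le_mul_of_nonneg_right c1 hp, mul_le_mul_of_nonneg_right c2 hm,
      mul_pos (Real.exp_pos (-|t|)) hsum]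
  have hD : 0 < Real.exp (-t) * Zp + Real.exp t * Zm := by
    nlinarith [mul_le_mul_of_nonneg_right c2 hp, mul_le_mul_of_nonneg_right c1 hm,
      mul_pos (Real.exp_pos (-|t|)) hsum]
  have c3 : Real.exp t ≤ Real.exp (2*|t|) * Real.exp (-t) := by
    rw [← Real.exp_add]
    exact Real.exp_le_exp.mpr (by have := le_abs_self t; linarith)
  have c4 : Real.exp (-t) ≤ Real.exp (2*|t|) * Real.exp t := by
    rw [← Real.exp_add]
    exact Real.exp_le_exp.mpr (by have := neg_abs_le t; linarith)
  have h1 : Real.exp t * Zp + Real.exp (-t) * Zm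
      ≤ Real.exp (2*|t|) * (Real.exp (-t) * Zp + Real.exp t * Zm) := by
    nlinarith [mul_le_mul_of_nonneg_right c3 hp, mul_le_mul_of_nonneg_right c4 hm]
  have h2 : Real.exp (-t) * Zp + Real.exp t * Zm
      ≤ Real.exp (2*|t|) * (Real.exp t * Zp + Real.exp (-t) * Zm) := by
    nlinarith [mul_le_mul_of_nonneg_right c4 hp, mul_le_mul_of_nonneg_right c3 hm]
  rw [Real.log_div hN.ne' hD.ne', abs_le]
  constructor
  · have hl := Real.log_le_log hD h2
    rw [Real.log_mul (Real.exp_ne_zero _) hN.ne', Real.log_exp] at hl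
    linarith
  · have hl := Real.log_le_log hN h1
    rw [Real.log_mul (Real.exp_ne_zero _) hD.ne', Real.log_exp] at hl
    linarith

end LogRatio


section Main

variable [Fintype V] [DecidableRel G.Adj]

lemma adj_minmax {u w : V} (h : G.Adj u w) : G.Adj (min u w) (max u w) := by
  rcases le_total u w with hle | hle
  · rwa [min_eq_left hle, max_eq_right hle]
  · rw [min_eq_right hle, max_eq_left hle]; exact h.symm

lemma main_ind (hT : G.IsTree) (θ : V → V → ℝ) (L : Finset V) (y : V → Bool)
    (D : ℕ) (hD : 0 < D) (hdeg : ∀ v, G.degree v ≤ D)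
    (hθ : ∀ a b, G.Adj a b → |θ a b| < Real.log 2 / (2 * (D : ℝ))) :
    ∀ n : ℕ, ∀ p u : V, (p = u ∨ G.Adj p u) → (subT G p u).card ≤ n → u ∉ L →
      ∀ hne : (L ∩ subT G p u).Nonempty,
      |Real.log (ZA G θ L y (subT G p u) u true / ZA G θ L y (subT G p u) u false)|
        ≤ Real.log 2 * (Real.log 2 / 2) ^
            ((L ∩ subT G p u).inf' hne (fun l => G.dist u l) - 1) := by
  have hlog2pos : 0 < Real.log 2 := Real.log_pos (by norm_num)
  have hlog2lt : Real.log 2 < 1 := by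
    have := Real.log_two_lt_d9
    linarith
  have hbasepos : 0 < Real.log 2 / 2 := by linarith
  have hbaselt : Real.log 2 / 2 ≤ 1 := by linarith
  have hDR : (1:ℝ) ≤ (D:ℝ) := by exact_mod_cast hD
  have htB : Real.log 2 / (2 * (D:ℝ)) ≤ 1/2 := by
    rw [div_le_iff₀ (by positivity)]
    nlinarith
  intro n
  induction n with
  | zero =>
    intro p u hpu hcard huL hne
    exfalso
    have h1 : 0 < (subT G p u).card := Finset.card_pos.mpr ⟨u, u_mem_subT hT hpu⟩
    omega
  | succ n ih =>
    intro p u hpu hcard huL hne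
    classical
    set A := subT G p u with hAdef
    set N := Nbr G p u with hNdef
    have hNadj : ∀ x ∈ N, G.Adj u x := fun x hx => (mem_Nbr.mp hx).1
    have hAeq : A = insert u (N.biUnion (fun w => sub G u w)) := subT_eq hT hpu
    -- per-child data
    set Zf : V → Bool → ℝ := fun w b => ZA G θ L y (sub G u w) w b with hZfdef
    set fE : V → Bool → ℝ := fun w ε =>
      ∑ b : Bool, Real.exp (tE θ u w * val' ε * val' b) * Zf w b with hfEdef
    have hfact : ∀ ε, ZA G θ L y A u ε = ∏ w ∈ N, fE w ε := by
      intro ε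
      rw [hAeq]
      exact fact hT huL N hNadj ε
    have hZsum : ∀ w ∈ N, 0 ≤ Zf w true ∧ 0 ≤ Zf w false ∧ 0 < Zf w true + Zf w false := by
      intro w hw
      have hwC : w ∈ sub G u w := self_mem_sub (hNadj w hw)
      refine ⟨ZA_nonneg _ _ _ _ _ _, ZA_nonneg _ _ _ _ _ _, ?_⟩
      by_cases hwL : w ∈ L
      · cases hyw : y w
        · have := ZA_pos (G := G) θ L y hwC (fun _ => hyw) (ε := false)
          have h2 := ZA_nonneg (G := G) θ L y (sub G u w) w true
          rw [hZfdef]; simp only []; linarith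
        · have := ZA_pos (G := G) θ L y hwC (fun _ => hyw) (ε := true)
          have h2 := ZA_nonneg (G := G) θ L y (sub G u w) w false
          rw [hZfdef]; simp only []; linarith
      · have := ZA_pos (G := G) θ L y hwC (fun h => absurd h hwL) (ε := true)
        have h2 := ZA_nonneg (G := G) θ L y (sub G u w) w false
        rw [hZfdef]; simp only []; linarith
    have htw : ∀ w ∈ N, |tE θ u w| < Real.log 2 / (2 * (D:ℝ)) := by
      intro w hw
      exact hθ _ _ (adj_minmax (hNadj w hw))
    have hfE_eq : ∀ w, (fE w true = Real.exp (tE θ u w) * Zf w true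
          + Real.exp (-(tE θ u w)) * Zf w false)
        ∧ (fE w false = Real.exp (-(tE θ u w)) * Zf w true
          + Real.exp (tE θ u w) * Zf w false) := by
      intro w
      rw [hfEdef]
      constructor <;>
      · simp only [Fintype.sum_bool, val'_true, val'_false]
        norm_num
    have hfEpos : ∀ w ∈ N, 0 < fE w true ∧ 0 < fE w false := by
      intro w hw
      obtain ⟨h1, h2, h3⟩ := hZsum w hw
      rw [(hfE_eq w).1, (hfE_eq w).2]
      have c1 : Real.exp (-|tE θ u w|) ≤ Real.exp (tE θ u w) :=
        Real.exp_le_exp.mpr (neg_abs_le _)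
      have c2 : Real.exp (-|tE θ u w|) ≤ Real.exp (-(tE θ u w)) :=
        Real.exp_le_exp.mpr (by have := le_abs_self (tE θ u w); linarith)
      constructor
      · nlinarith [mul_le_mul_of_nonneg_right c1 h1, mul_le_mul_of_nonneg_right c2 h2,
          mul_pos (Real.exp_pos (-|tE θ u w|)) h3]
      · nlinarith [mul_le_mul_of_nonneg_right c2 h1, mul_le_mul_of_nonneg_right c1 h2,
          mul_pos (Real.exp_pos (-|tE θ u w|)) h3]
    -- the total log-ratio equals sum of per-child log-ratios
    have hlogsum : Real.log (ZA G θ L y A u true / ZA G θ L y A u false)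
        = ∑ w ∈ N, Real.log (fE w true / fE w false) := by
      rw [hfact true, hfact false]
      rw [Real.log_div (Finset.prod_ne_zero_iff.mpr (fun w hw => (hfEpos w hw).1.ne'))
        (Finset.prod_ne_zero_iff.mpr (fun w hw => (hfEpos w hw).2.ne'))]
      rw [Real.log_prod (fun w hw => (hfEpos w hw).1.ne'),
        Real.log_prod (fun w hw => (hfEpos w hw).2.ne')]
      rw [← Finset.sum_sub_distrib]
      refine Finset.sum_congr rfl fun w hw => ?_
      rw [Real.log_div (hfEpos w hw).1.ne' (hfEpos w hw).2.ne']
    set m : ℕ := (L ∩ A).inf' hne (fun l => G.dist u l) with hmdef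
    have hm1 : 1 ≤ m := by
      rw [hmdef]
      apply Finset.le_inf'
      intro l hl
      rw [Finset.mem_inter] at hl
      have hlu : l ≠ u := fun h => huL (h ▸ hl.1)
      exact hT.isConnected.pos_dist_of_ne (Ne.symm hlu)
    -- per-child bound
    have hperw : ∀ w ∈ N, |Real.log (fE w true / fE w false)|
        ≤ Real.log 2 / (D:ℝ) * (Real.log 2 / 2) ^ (m - 1) := by
      intro w hw
      obtain ⟨hZp, hZm, hZs⟩ := hZsum w hw
      have htwa := htw w hw
      have hbw : 0 ≤ Real.log 2 / (D:ℝ) * (Real.log 2 / 2) ^ (m - 1) := by positivity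
      by_cases hLC : (L ∩ sub G u w) = ∅
      · -- no conditioned vertices below w : log-ratio is zero
        have hLA : ∀ v ∈ L, v ∉ sub G u w := by
          intro v hv hvC
          have : v ∈ L ∩ sub G u w := Finset.mem_inter.mpr ⟨hv, hvC⟩
          rw [hLC] at this
          exact absurd this (Finset.notMem_empty v)
        have := ZA_flip (G := G) θ L y (self_mem_sub (hNadj w hw)) hLA true
        have hflip : Zf w true = Zf w false := by
          rw [hZfdef]; simp only []; exact this
        have : fE w true = fE w false := by
          rw [(hfE_eq w).1, (hfE_eq w).2, hflip]; ring
        rw [this, div_self (hfEpos w hw).2.ne', Real.log_one, abs_zero]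
        exact hbw
      · rcases Nat.lt_or_ge m 2 with hm2 | hm2
        · -- m = 1 : crude bound
          have hmeq : m = 1 := by omega
          have hcrude : |Real.log (fE w true / fE w false)| ≤ 2 * |tE θ u w| := by
            rw [(hfE_eq w).1, (hfE_eq w).2]
            exact logratio_crude (tE θ u w) hZp hZm hZs
          rw [hmeq]
          simp only [Nat.sub_self, pow_zero, mul_one]
          calc |Real.log (fE w true / fE w false)| ≤ 2 * |tE θ u w| := hcrude
            _ ≤ 2 * (Real.log 2 / (2 * (D:ℝ))) := by linarith [htwa, abs_nonneg (tE θ u w)]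
            _ = Real.log 2 / (D:ℝ) := by field_simp
        · -- m ≥ 2 : recursive bound
          have hwNL : w ∉ L := by
            intro hwL
            have hwA : w ∈ A := by
              rw [hAeq]
              exact Finset.mem_insert_of_mem (Finset.mem_biUnion.mpr
                ⟨w, hw, self_mem_sub (hNadj w hw)⟩)
            have : m ≤ G.dist u w :=
              Finset.inf'_le _ (Finset.mem_inter.mpr ⟨hwL, hwA⟩)
            rw [adj_dist_one (hNadj w hw)] at this
            omega
          have hneW : (L ∩ subT G u w).Nonempty := by
            rw [Finset.nonempty_iff_ne_empty]
            rw [show subT G u w = sub G u w from if_neg (hNadj w hw).ne]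
            exact hLC
          have hZppos : 0 < Zf w true := by
            rw [hZfdef]; simp only []
            exact ZA_pos θ L y (self_mem_sub (hNadj w hw)) (fun h => absurd h hwNL)
          have hZmpos : 0 < Zf w false := by
            rw [hZfdef]; simp only []
            exact ZA_pos θ L y (self_mem_sub (hNadj w hw)) (fun h => absurd h hwNL)
          -- apply induction hypothesis to child subtree
          have hcard' : (subT G u w).card ≤ n := by
            have hsub : subT G u w ⊆ A.erase u := by
              rw [show subT G u w = sub G u w from if_neg (hNadj w hw).ne]
              intro v hv
              rw [Finset.mem_erase]
              refine ⟨?_, ?_⟩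
              · intro hvu
                exact u_not_mem_sub (hNadj w hw) (hvu ▸ hv)
              · rw [hAeq]
                exact Finset.mem_insert_of_mem (Finset.mem_biUnion.mpr ⟨w, hw, hv⟩)
            have h1 := Finset.card_le_card hsub
            have h2 : (A.erase u).card = A.card - 1 :=
              Finset.card_erase_of_mem (u_mem_subT hT hpu)
            have h3 : 0 < A.card := Finset.card_pos.mpr ⟨u, u_mem_subT hT hpu⟩
            omega
          have hIH := ih u w (Or.inr (hNadj w hw)) hcard' hwNL hneW
          -- relate child inf' to m
          set mw : ℕ := (L ∩ subT G u w).inf' hneW (fun l => G.dist w l) with hmwdef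
          have hmw : m - 1 ≤ mw := by
            rw [hmwdef]
            apply Finset.le_inf'
            intro l hl
            rw [Finset.mem_inter] at hl
            have hlsub : l ∈ sub G u w := by
              rw [show subT G u w = sub G u w from if_neg (hNadj w hw).ne] at hl
              exact hl.2
            have hdist : G.dist u l = G.dist w l + 1 := mem_sub.mp hlsub
            have hlA : l ∈ A := by
              rw [hAeq]
              exact Finset.mem_insert_of_mem (Finset.mem_biUnion.mpr ⟨w, hw, hlsub⟩)
            have : m ≤ G.dist u l := Finset.inf'_le _ (Finset.mem_inter.mpr ⟨hl.1, hlA⟩)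
            omega
          have hmvt : |Real.log (fE w true / fE w false)|
              ≤ |tE θ u w| * |Real.log (Zf w true / Zf w false)| := by
            rw [(hfE_eq w).1, (hfE_eq w).2]
            exact logratio_bound (le_trans htwa.le htB) hZppos hZmpos
          have hZration : |Real.log (Zf w true / Zf w false)|
              ≤ Real.log 2 * (Real.log 2 / 2) ^ (mw - 1) := by
            rw [hZfdef]; simp only []
            rw [show sub G u w = subT G u w from (if_neg (hNadj w hw).ne).symm]
            exact hIH
          have hpowle : (Real.log 2 / 2) ^ (mw - 1) ≤ (Real.log 2 / 2) ^ (m - 2) :=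
            pow_le_pow_of_le_one hbasepos.le hbaselt (by omega)
          calc |Real.log (fE w true / fE w false)|
              ≤ |tE θ u w| * |Real.log (Zf w true / Zf w false)| := hmvt
            _ ≤ (Real.log 2 / (2 * (D:ℝ))) * (Real.log 2 * (Real.log 2 / 2) ^ (mw - 1)) := by
                apply mul_le_mul htwa.le hZration (abs_nonneg _) (by positivity)
            _ ≤ (Real.log 2 / (2 * (D:ℝ))) * (Real.log 2 * (Real.log 2 / 2) ^ (m - 2)) := by
                apply mul_le_mul_of_nonneg_left _ (by positivity)
                exact mul_le_mul_of_nonneg_left hpowle hlog2pos.le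
            _ = Real.log 2 / (D:ℝ) * (Real.log 2 / 2) ^ (m - 1) := by
                rw [show m - 1 = (m - 2) + 1 by omega, pow_succ]
                field_simp
    -- sum up
    rw [hlogsum]
    calc |∑ w ∈ N, Real.log (fE w true / fE w false)|
        ≤ ∑ w ∈ N, |Real.log (fE w true / fE w false)| := Finset.abs_sum_le_sum_abs _ _
      _ ≤ ∑ w ∈ N, Real.log 2 / (D:ℝ) * (Real.log 2 / 2) ^ (m - 1) :=
          Finset.sum_le_sum hperw
      _ = (N.card : ℝ) * (Real.log 2 / (D:ℝ) * (Real.log 2 / 2) ^ (m - 1)) := by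
          rw [Finset.sum_const, nsmul_eq_mul]
      _ ≤ (D : ℝ) * (Real.log 2 / (D:ℝ) * (Real.log 2 / 2) ^ (m - 1)) := by
          apply mul_le_mul_of_nonneg_right _ (by positivity)
          have h1 := card_Nbr_le_degree (G := G) p u
          have h2 := hdeg u
          exact_mod_cast le_trans h1 h2
      _ = Real.log 2 * (Real.log 2 / 2) ^ (m - 1) := by
          field_simp

end Main

end CD

namespace CD

variable {V : Type*} [LinearOrder V] [Fintype V] {G : SimpleGraph V} [DecidableRel G.Adj]

lemma isingWeight_eq_wIn (θ : V → V → ℝ) (σ : V → Bool) :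
    isingWeight G θ σ = wIn G θ Finset.univ σ := by
  unfold isingWeight wIn
  refine Finset.prod_congr ?_ (fun _ _ => rfl)
  ext p
  simp [eIn]

lemma sum_weight_flip (θ : V → V → ℝ) (b : Bool) :
    (∑ σ : V → Bool, if σ r = b then isingWeight G θ σ else 0)
      = ∑ σ : V → Bool, if σ r = !b then isingWeight G θ σ else 0 := by
  classical
  have hinv : Function.Involutive (fun (σ : V → Bool) => fun v => !(σ v)) := by
    intro σ; funext v; simp
  have key : ∑ σ : V → Bool,
      (if (fun v => !(σ v)) r = !b then isingWeight G θ (fun v => !(σ v)) else 0)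
      = ∑ σ : V → Bool, if σ r = !b then isingWeight G θ σ else 0 :=
    Fintype.sum_equiv hinv.toPerm _ _ (fun σ => rfl)
  rw [← key]
  refine Finset.sum_congr rfl fun σ _ => ?_
  have hcond : (σ r = b) ↔ ((fun v => !(σ v)) r = !b) := by
    simp only []
    cases hσ : σ r <;> cases b <;> simp
  have hwt : isingWeight G θ σ = isingWeight G θ (fun v => !(σ v)) := by
    unfold isingWeight
    refine Finset.prod_congr rfl fun p _ => ?_
    have h1 : val (!(σ p.1)) = - val (σ p.1) := by cases σ p.1 <;> simp [_root_.val]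
    have h2 : val (!(σ p.2)) = - val (σ p.2) := by cases σ p.2 <;> simp [_root_.val]
    simp only []
    rw [h1, h2]
    congr 1
    ring
  by_cases h : σ r = b
  · rw [if_pos h, if_pos (hcond.mp h), ← hwt]
  · rw [if_neg h, if_neg (fun hx => h (hcond.mpr hx))]

lemma weight_pos (θ : V → V → ℝ) (σ : V → Bool) : 0 < isingWeight G θ σ :=
  Finset.prod_pos fun _ _ => Real.exp_pos _

lemma rootMarg_eq_half (θ : V → V → ℝ) (r : V) (b : Bool) :
    rootMarg G θ r b = 1 / 2 := by
  classical
  unfold rootMarg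
  have hflip := sum_weight_flip (G := G) (r := r) θ b
  have htot : (∑ σ : V → Bool, isingWeight G θ σ)
      = (∑ σ : V → Bool, if σ r = b then isingWeight G θ σ else 0)
        + (∑ σ : V → Bool, if σ r = !b then isingWeight G θ σ else 0) := by
    rw [← Finset.sum_add_distrib]
    refine Finset.sum_congr rfl fun σ _ => ?_
    by_cases h : σ r = b
    · rw [if_pos h, if_neg (by simp [h]), add_zero]
    · rw [if_neg h, if_pos (by cases hσ : σ r <;> cases b <;> simp_all), zero_add]
  have hSpos : 0 < ∑ σ : V → Bool, if σ r = b then isingWeight G θ σ else 0 := by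
    refine Finset.sum_pos' (fun σ _ => ?_) ⟨(fun _ => b), Finset.mem_univ _, ?_⟩
    · split
      · exact (weight_pos θ σ).le
      · exact le_refl 0
    · rw [if_pos rfl]
      exact weight_pos θ _
  rw [htot, ← hflip, div_eq_iff (by linarith : (∑ σ : V → Bool,
    if σ r = b then isingWeight G θ σ else 0)
    + (∑ σ : V → Bool, if σ r = b then isingWeight G θ σ else 0) ≠ 0)]
  ring

lemma condRootProb_eq (θ : V → V → ℝ) (r : V) (L : Finset V) (y : V → Bool) (b : Bool) :
    condRootProb G θ r L b y = ZA G θ L y Finset.univ r b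
      / (ZA G θ L y Finset.univ r true + ZA G θ L y Finset.univ r false) := by
  classical
  unfold condRootProb
  have hnum : (∑ σ : V → Bool, if (∀ v ∈ L, σ v = y v) ∧ σ r = b
      then isingWeight G θ σ else 0) = ZA G θ L y Finset.univ r b := by
    unfold ZA
    refine Finset.sum_congr rfl fun σ _ => ?_
    rw [isingWeight_eq_wIn]
    refine if_congr ?_ rfl rfl
    constructor
    · rintro ⟨h1, h2⟩
      exact ⟨fun v hv _ => h1 v hv, h2, fun v hv => absurd (Finset.mem_univ v) hv⟩
    · rintro ⟨h1, h2, -⟩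
      exact ⟨fun v hv => h1 v hv (Finset.mem_univ v), h2⟩
  have hden : (∑ σ : V → Bool, if (∀ v ∈ L, σ v = y v) then isingWeight G θ σ else 0)
      = ZA G θ L y Finset.univ r true + ZA G θ L y Finset.univ r false := by
    unfold ZA
    rw [← Finset.sum_add_distrib]
    refine Finset.sum_congr rfl fun σ _ => ?_
    rw [isingWeight_eq_wIn]
    by_cases h : ∀ v ∈ L, σ v = y v
    · cases hσ : σ r
      · rw [if_pos h, if_neg (by simp [hσ]), if_pos
          ⟨fun v hv _ => h v hv, rfl, fun v hv => absurd (Finset.mem_univ v) hv⟩, zero_add]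
      · rw [if_pos h, if_pos
          ⟨fun v hv _ => h v hv, rfl, fun v hv => absurd (Finset.mem_univ v) hv⟩, if_neg
          (by simp [hσ]), add_zero]
    · rw [if_neg h, if_neg (fun hc => h (fun v hv => hc.1 v hv (Finset.mem_univ v))),
        if_neg (fun hc => h (fun v hv => hc.1 v hv (Finset.mem_univ v))), add_zero]
  rw [hnum, hden]

end CD

set_option maxHeartbeats 1000000 in
/-- Correlation decay in a tree Ising model: if the maximum degree is at most `D` and all
edge parameters satisfy `|θ_{ij}| < log 2 / (2D)`, then for all `x_r ∈ {−1,1}` and all leaf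
configurations `x_L`, `|P(x_r | x_L) − P(x_r)| < exp(−(log 2)/3 · d(r,L))`, where `d(r,L)`
is the distance from the root `r` to the nearest leaf. -/
theorem stmt_10 {V : Type*} [Fintype V] [LinearOrder V]
    (G : SimpleGraph V) [DecidableRel G.Adj] (hT : G.IsTree)
    (r : V) (L : Finset V) (hL : ∀ v, v ∈ L ↔ v ≠ r ∧ G.degree v = 1)
    (hLne : L.Nonempty)
    (D : ℕ) (hD : 0 < D) (hdeg : ∀ v, G.degree v ≤ D)
    (θ : V → V → ℝ) (hθ : ∀ p q, G.Adj p q → |θ p q| < Real.log 2 / (2 * (D : ℝ))) :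
    ∀ (b : Bool) (y : V → Bool),
      |condRootProb G θ r L b y - rootMarg G θ r b| <
        Real.exp (-(Real.log 2) / 3 * (L.inf' hLne (fun l => G.dist r l) : ℝ)) := by
  classical
  intro b y
  set d : ℕ := L.inf' hLne (fun l => G.dist r l) with hddef
  have hrL : r ∉ L := fun h => ((hL r).mp h).1 rfl
  have hd1 : 1 ≤ d := by
    rw [hddef]
    apply Finset.le_inf'
    intro l hl
    exact hT.isConnected.pos_dist_of_ne (Ne.symm ((hL l).mp hl).1)
  have hsubT : CD.subT G r r = Finset.univ := if_pos rfl
  have hne' : (L ∩ CD.subT G r r).Nonempty := by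
    rw [hsubT, Finset.inter_univ]
    exact hLne
  have hmain := CD.main_ind hT θ L y D hD hdeg hθ (CD.subT G r r).card r r (Or.inl rfl)
    le_rfl hrL hne'
  have hmd : (L ∩ CD.subT G r r).inf' hne' (fun l => G.dist r l) = d := by
    apply le_antisymm
    · apply Finset.le_inf' hLne
      intro l hl
      exact Finset.inf'_le _ (Finset.mem_inter.mpr ⟨hl, by
        rw [hsubT]; exact Finset.mem_univ l⟩)
    · apply Finset.le_inf' hne'
      intro l hl
      exact Finset.inf'_le _ (Finset.mem_inter.mp hl).1
  rw [hmd] at hmain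
  set Zt := CD.ZA G θ L y (CD.subT G r r) r true with hZt
  set Zf := CD.ZA G θ L y (CD.subT G r r) r false with hZf
  have hZtpos : 0 < Zt := by
    rw [hZt]
    exact CD.ZA_pos θ L y (by rw [hsubT]; exact Finset.mem_univ r)
      (fun h => absurd h hrL)
  have hZfpos : 0 < Zf := by
    rw [hZf]
    exact CD.ZA_pos θ L y (by rw [hsubT]; exact Finset.mem_univ r)
      (fun h => absurd h hrL)
  have hlog2pos : 0 < Real.log 2 := Real.log_pos (by norm_num)
  have hlog2lt : Real.log 2 < 0.6931471808 := Real.log_two_lt_d9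
  set Lam : ℝ := Real.log 2 * (Real.log 2 / 2) ^ (d - 1) with hLam
  have hLampos : 0 < Lam := by positivity
  have hLamle : Lam ≤ Real.log 2 := by
    rw [hLam]
    have h1 : (Real.log 2 / 2) ^ (d - 1) ≤ 1 :=
      pow_le_one₀ (by positivity) (by linarith)
    nlinarith
  set E : ℝ := Real.exp Lam with hE
  have hE1 : 1 ≤ E := by
    rw [hE]
    calc (1:ℝ) = Real.exp 0 := Real.exp_zero.symm
      _ ≤ Real.exp Lam := Real.exp_le_exp.mpr hLampos.le
  have hE2 : E ≤ 2 := by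
    rw [hE]
    calc Real.exp Lam ≤ Real.exp (Real.log 2) := Real.exp_le_exp.mpr hLamle
      _ = 2 := Real.exp_log (by norm_num)
  have hEm1 : E - 1 ≤ 2 * Lam := by
    have h1 := Real.add_one_le_exp (-Lam)
    have h2 : Real.exp (-Lam) = E⁻¹ := by rw [hE, Real.exp_neg]
    rw [h2] at h1
    have h3 : E * E⁻¹ = 1 := mul_inv_cancel₀ (by linarith)
    nlinarith
  have hZtE : Zt ≤ E * Zf := by
    have h1 : Real.log (Zt / Zf) ≤ Lam := (abs_le.mp hmain).2
    have h2 : Zt / Zf ≤ E := by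
      rw [hE]
      rw [← Real.exp_log (show 0 < Zt / Zf by positivity)]
      exact Real.exp_le_exp.mpr h1
    rw [div_le_iff₀ hZfpos] at h2
    linarith [h2]
  have hZfE : Zf ≤ E * Zt := by
    have h1 : -Lam ≤ Real.log (Zt / Zf) := (abs_le.mp hmain).1
    have h2 : Real.exp (-Lam) ≤ Zt / Zf := by
      rw [← Real.exp_log (show 0 < Zt / Zf by positivity)]
      exact Real.exp_le_exp.mpr h1
    have h3 : Real.exp (-Lam) = E⁻¹ := by rw [hE, Real.exp_neg]
    rw [h3] at h2
    have h4 : E⁻¹ * Zf ≤ Zt := by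
      rw [le_div_iff₀ hZfpos] at h2
      linarith
    have h5 : E * (E⁻¹ * Zf) ≤ E * Zt := mul_le_mul_of_nonneg_left h4 (by linarith)
    have h6 : E * E⁻¹ = 1 := mul_inv_cancel₀ (by linarith)
    nlinarith
  -- the probability deviation
  have hcond := CD.condRootProb_eq (G := G) θ r L y b
  rw [← hsubT] at hcond
  have hmarg := CD.rootMarg_eq_half (G := G) θ r b
  have hdev : |condRootProb G θ r L b y - rootMarg G θ r b|
      = |Zt - Zf| / (2 * (Zt + Zf)) := by
    rw [hcond, hmarg, ← hZt, ← hZf]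
    have hsum : 0 < Zt + Zf := by linarith
    cases b
    · have : Zf / (Zt + Zf) - 1/2 = -((Zt - Zf) / (2 * (Zt + Zf))) := by
        field_simp
        ring
      rw [this, abs_neg, abs_div, abs_of_pos (by linarith : (0:ℝ) < 2 * (Zt + Zf))]
    · have : Zt / (Zt + Zf) - 1/2 = (Zt - Zf) / (2 * (Zt + Zf)) := by
        field_simp
        ring
      rw [this, abs_div, abs_of_pos (by linarith : (0:ℝ) < 2 * (Zt + Zf))]
  have hdevle : |Zt - Zf| / (2 * (Zt + Zf)) ≤ (E - 1) / 4 := by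
    rw [div_le_div_iff₀ (by linarith) (by norm_num)]
    rcases le_total Zt Zf with h | h
    · rw [abs_of_nonpos (by linarith)]
      nlinarith [hZfE]
    · rw [abs_of_nonneg (by linarith)]
      nlinarith [hZtE]
  have hfinle : (E - 1) / 4 ≤ (Real.log 2 / 2) ^ d := by
    have h1 : (E - 1) / 4 ≤ Lam / 2 := by linarith
    have h2 : Lam / 2 = (Real.log 2 / 2) ^ d := by
      have h3 : (Real.log 2/2:ℝ) ^ d = (Real.log 2/2) ^ (d-1) * (Real.log 2/2) := by
        rw [← pow_succ, show d - 1 + 1 = d by omega]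
      rw [hLam, h3]
      ring
    linarith
  have hnum : (Real.log 2 / 2 : ℝ) < Real.exp (-(Real.log 2) / 3) := by
    have h1 := Real.add_one_le_exp (-(Real.log 2) / 3)
    linarith
  have hfin : ((Real.log 2 / 2) ^ d : ℝ)
      < Real.exp (-(Real.log 2) / 3 * (d : ℝ)) := by
    have h1 : ((Real.log 2 / 2) ^ d : ℝ) < (Real.exp (-(Real.log 2) / 3)) ^ d :=
      pow_lt_pow_left₀ hnum (by positivity) (by omega)
    have h2 : (Real.exp (-(Real.log 2) / 3)) ^ d
        = Real.exp (-(Real.log 2) / 3 * (d : ℝ)) := by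
      rw [← Real.exp_nat_mul]
      ring_nf
    rw [← h2]
    exact h1
  have hcast : (L.inf' hLne fun l => ((G.dist r l : ℕ) : ℝ)) = (d : ℝ) := by
    apply le_antisymm
    · obtain ⟨l₀, hl₀, hval⟩ := Finset.exists_mem_eq_inf' hLne (fun l => G.dist r l)
      calc (L.inf' hLne fun l => ((G.dist r l : ℕ) : ℝ)) ≤ ((G.dist r l₀ : ℕ) : ℝ) :=
            Finset.inf'_le _ hl₀
        _ = (d : ℝ) := by rw [hddef, hval]
    · apply Finset.le_inf'
      intro l hl
      have : d ≤ G.dist r l := by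
        rw [hddef]
        exact Finset.inf'_le _ hl
      exact_mod_cast this
  calc |condRootProb G θ r L b y - rootMarg G θ r b|
      = |Zt - Zf| / (2 * (Zt + Zf)) := hdev
    _ ≤ (E - 1) / 4 := hdevle
    _ ≤ (Real.log 2 / 2) ^ d := hfinle
    _ < Real.exp (-(Real.log 2) / 3 * (d : ℝ)) := hfin
    _ = Real.exp (-(Real.log 2) / 3 * (L.inf' hLne fun l => ((G.dist r l : ℕ) : ℝ))) := by
        rw [hcast]
end

section
/- Let P(x_r = 1 | X_L = 1) = a(d−1) in a tree of depth d−1 below a child c of the root, and let b(d) = P(X_c = 1 | X_r = 1, X_L = 1) = e^θ a(d−1)/(e^θ a(d−1) + e^{−θ}(1−a(d−1))) where θ = θ_{rc}. Then |b(d) − e^θ/(e^θ + e^{−θ})| < 2·|a(d−1) − 1/2|. -/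
/-- Real-analysis inequality behind the neighbor correlation-decay lemma: with
`b = e^θ a / (e^θ a + e^{−θ}(1−a))` and `a ∈ [0,1]`, `a ≠ 1/2`, one has
`|b − e^θ/(e^θ + e^{−θ})| < 2 |a − 1/2|`. -/
theorem stmt_12 (θ a : ℝ) (ha0 : 0 ≤ a) (ha1 : a ≤ 1) (hane : a ≠ 1 / 2) :
    |Real.exp θ * a / (Real.exp θ * a + Real.exp (-θ) * (1 - a)) -
        Real.exp θ / (Real.exp θ + Real.exp (-θ))| < 2 * |a - 1 / 2| := by
  set p := Real.exp θ with hp'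
  set q := Real.exp (-θ) with hq'
  have hp : 0 < p := Real.exp_pos _
  have hq : 0 < q := Real.exp_pos _
  have hD : 0 < p * a + q * (1 - a) := by
    have hm : 0 < min p q := lt_min hp hq
    nlinarith [min_le_left p q, min_le_right p q]
  have hS : 0 < p + q := by linarith
  have key : p * a / (p * a + q * (1 - a)) - p / (p + q)
      = p * q * (2 * a - 1) / ((p * a + q * (1 - a)) * (p + q)) := by
    field_simp
    ring
  rw [key, abs_div,
    abs_of_pos (by positivity : (0:ℝ) < (p * a + q * (1 - a)) * (p + q)),
    div_lt_iff₀ (by positivity)]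
  have h2 : |2 * a - 1| = 2 * |a - 1/2| := by
    rw [show (2*a - 1) = 2*(a - 1/2) by ring, abs_mul, abs_two]
  have habs : 0 < |a - 1/2| := abs_pos.mpr (sub_ne_zero.mpr hane)
  rw [abs_mul, abs_mul, abs_of_pos hp, abs_of_pos hq, h2]
  have hE : 0 < p ^ 2 * a + q ^ 2 * (1 - a) := by
    have hm : 0 < min (p ^ 2) (q ^ 2) := lt_min (by positivity) (by positivity)
    nlinarith [min_le_left (p ^ 2) (q ^ 2), min_le_right (p ^ 2) (q ^ 2)]
  nlinarith [mul_pos habs hE]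
end
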